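/- arXiv:1305.0363 — 9 statements merged into one kernel-verified Lean document; each statement's English description precedes it below -/
import Mathlib

section
/- Let G and H be connected graphs of orders n1 ≥ 2 and n2, respectively. Then dim(G ⊠ H) ≤ n1·dim(H) + n2·dim(G) − dim(G)·dim(H). -/
open SimpleGraph

/-- The strong product of two simple graphs. -/
def strongProd {α β : Type*} (G : SimpleGraph α) (H : SimpleGraph β) :
    SimpleGraph (α × β) where
  Adj x y := x ≠ y ∧ (x.1 = y.1 ∨ G.Adj x.1 y.1) ∧ (x.2 = y.2 ∨ H.Adj x.2 y.2)
  symm := by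
    constructor
    rintro ⟨a, b⟩ ⟨c, d⟩ ⟨hne, h1, h2⟩
    refine ⟨hne.symm, ?_, ?_⟩
    · rcases h1 with h | h
      · exact Or.inl h.symm
      · exact Or.inr h.symm
    · rcases h2 with h | h
      · exact Or.inl h.symm
      · exact Or.inr h.symm
  loopless := by constructor; rintro ⟨a, b⟩ ⟨hne, -, -⟩; exact hne rfl

/-- A set `S` is a metric generator for `G` if every pair of distinct vertices is
distinguished by some element of `S`. -/
def IsMetricGen {α : Type*} (G : SimpleGraph α) (S : Set α) : Prop :=
  ∀ x y : α, x ≠ y → ∃ s ∈ S, G.dist x s ≠ G.dist y s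

/-- The metric dimension of a graph: minimum cardinality of a metric generator. -/
noncomputable def metricDim {α : Type*} (G : SimpleGraph α) : ℕ :=
  sInf {n | ∃ S : Set α, IsMetricGen G S ∧ S.ncard = n}

/-- `G` is self `k`-resolved if for all distinct `x, y` there is `w` such that
`d(y,w) ≥ k` and `x` lies on a shortest `y`–`w` path, or symmetrically. -/
def SelfResolved {α : Type*} (G : SimpleGraph α) (k : ℕ) : Prop :=
  ∀ x y : α, x ≠ y → ∃ w : α,
    (k ≤ G.dist y w ∧ G.dist y x + G.dist x w = G.dist y w) ∨
    (k ≤ G.dist x w ∧ G.dist x y + G.dist y w = G.dist x w)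

/-- Two vertices are true twins if their closed neighborhoods coincide. -/
def TrueTwins {α : Type*} (G : SimpleGraph α) (u v : α) : Prop :=
  insert u (G.neighborSet u) = insert v (G.neighborSet v)

/-- The number of equivalence classes of the true twin relation. -/
noncomputable def numTrueTwinClasses {α : Type*} (G : SimpleGraph α) : ℕ :=
  Nat.card (Quotient (Setoid.ker (fun v => insert v (G.neighborSet v))))

section aux
variable {α β : Type*} {G : SimpleGraph α} {H : SimpleGraph β}

def homL (G : SimpleGraph α) (H : SimpleGraph β) (b : β) : G →g strongProd G H where
  toFun a := (a, b)
  map_rel' := by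
    intro a a' h
    exact ⟨by simp [Prod.ext_iff, h.ne], Or.inr h, Or.inl rfl⟩

def homR (G : SimpleGraph α) (H : SimpleGraph β) (a : α) : H →g strongProd G H where
  toFun b := (a, b)
  map_rel' := by
    intro b b' h
    exact ⟨by simp [Prod.ext_iff, h.ne], Or.inl rfl, Or.inr h⟩

def comb : ∀ {a c : α} {b d : β}, G.Walk a c → H.Walk b d →
    (strongProd G H).Walk (a, b) (c, d)
  | _, _, _, _, Walk.nil, q => q.map (homR G H _)
  | _, _, _, _, Walk.cons hp p, Walk.nil => (Walk.cons hp p).map (homL G H _)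
  | _, _, _, _, Walk.cons hp p, Walk.cons hq q =>
      Walk.cons ⟨by simp [Prod.ext_iff, hp.ne], Or.inr hp, Or.inr hq⟩ (comb p q)

lemma comb_length : ∀ {a c : α} {b d : β} (p : G.Walk a c) (q : H.Walk b d),
    (comb p q).length = max p.length q.length
  | _, _, _, _, Walk.nil, q => by simp only [comb]; exact (Walk.length_map _ _).trans (by simp)
  | _, _, _, _, Walk.cons hp p, Walk.nil => by simp only [comb]; exact (Walk.length_map _ _).trans (by simp)
  | _, _, _, _, Walk.cons hp p, Walk.cons hq q => by
      simp only [comb]; exact (Walk.length_cons _ _).trans (by rw [comb_length p q]; simp [Nat.succ_max_succ])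

lemma proj_walk : ∀ {x y : α × β} (W : (strongProd G H).Walk x y),
    (∃ p : G.Walk x.1 y.1, p.length ≤ W.length) ∧
    (∃ q : H.Walk x.2 y.2, q.length ≤ W.length)
  | _, _, Walk.nil => ⟨⟨Walk.nil, le_rfl⟩, ⟨Walk.nil, le_rfl⟩⟩
  | x, y, Walk.cons h W => by
    obtain ⟨⟨p, hp⟩, ⟨q, hq⟩⟩ := proj_walk W
    obtain ⟨-, h1, h2⟩ := h
    constructor
    · rcases h1 with h1 | h1
      · exact ⟨p.copy h1.symm rfl, by show _ ≤ W.length + 1; simpa using hp.trans (Nat.le_succ _)⟩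
      · exact ⟨Walk.cons h1 p, by show _ ≤ W.length + 1; simpa using hp⟩
    · rcases h2 with h2 | h2
      · exact ⟨q.copy h2.symm rfl, by show _ ≤ W.length + 1; simpa using hq.trans (Nat.le_succ _)⟩
      · exact ⟨Walk.cons h2 q, by show _ ≤ W.length + 1; simpa using hq⟩

lemma strongProd_connected (hG : G.Connected) (hH : H.Connected) :
    (strongProd G H).Connected := by
  have : Nonempty (α × β) := ⟨(hG.nonempty.some, hH.nonempty.some)⟩
  rw [connected_iff_exists_forall_reachable]
  refine ⟨(hG.nonempty.some, hH.nonempty.some), fun ⟨a, b⟩ => ?_⟩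
  exact ⟨comb ((hG _ _).some) ((hH _ _).some)⟩

lemma dist_le_max (hG : G.Connected) (hH : H.Connected) (a c : α) (b d : β) :
    (strongProd G H).dist (a, b) (c, d) ≤ max (G.dist a c) (H.dist b d) := by
  obtain ⟨p, hp⟩ := hG.exists_walk_length_eq_dist a c
  obtain ⟨q, hq⟩ := hH.exists_walk_length_eq_dist b d
  calc (strongProd G H).dist (a, b) (c, d) ≤ (comb p q).length := dist_le _
    _ = _ := by rw [comb_length, hp, hq]

lemma max_le_dist (hG : G.Connected) (hH : H.Connected) (a c : α) (b d : β) :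
    max (G.dist a c) (H.dist b d) ≤ (strongProd G H).dist (a, b) (c, d) := by
  obtain ⟨W, hW⟩ := (strongProd_connected hG hH).exists_walk_length_eq_dist (a, b) (c, d)
  obtain ⟨⟨p, hp⟩, ⟨q, hq⟩⟩ := proj_walk W
  exact max_le (le_trans (dist_le p) (hW ▸ hp)) (le_trans (dist_le q) (hW ▸ hq))

end aux

section main2
variable {α β : Type*} {G : SimpleGraph α} {H : SimpleGraph β}

lemma univ_gen (hG : G.Connected) : IsMetricGen G Set.univ := by
  intro x y hxy
  refine ⟨x, Set.mem_univ x, ?_⟩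
  rw [dist_self]
  exact fun h => hxy ((hG.dist_eq_zero_iff.mp h.symm)).symm

lemma exists_min_gen (hG : G.Connected) :
    ∃ S : Set α, IsMetricGen G S ∧ S.ncard = metricDim G :=
  Nat.sInf_mem (⟨_, ⟨Set.univ, univ_gen hG, rfl⟩⟩ :
    {n | ∃ S : Set α, IsMetricGen G S ∧ S.ncard = n}.Nonempty)

lemma ncard_prod [Fintype α] [Fintype β] (s : Set α) (t : Set β) :
    (s ×ˢ t).ncard = s.ncard * t.ncard := by
  classical
  simp [Set.ncard_eq_toFinset_card', Set.toFinset_prod]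

end main2

theorem stmt_1 {α β : Type*} [Fintype α] [Fintype β]
    (G : SimpleGraph α) (H : SimpleGraph β)
    (hG : G.Connected) (hH : H.Connected) (h1 : 2 ≤ Fintype.card α) :
    metricDim (strongProd G H) ≤
      Fintype.card α * metricDim H + Fintype.card β * metricDim G -
        metricDim G * metricDim H := by
  classical
  obtain ⟨A, hA, hAcard⟩ := exists_min_gen hG
  obtain ⟨B, hB, hBcard⟩ := exists_min_gen hH
  set S : Set (α × β) := (A ×ˢ Set.univ) ∪ (Set.univ ×ˢ B) with hS
  have hdist : ∀ (a c : α) (b d : β),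
      (strongProd G H).dist (a, b) (c, d) = max (G.dist a c) (H.dist b d) :=
    fun a c b d => le_antisymm (dist_le_max hG hH a c b d) (max_le_dist hG hH a c b d)
  have hgen : IsMetricGen (strongProd G H) S := by
    rintro ⟨x1, x2⟩ ⟨y1, y2⟩ hxy
    by_cases h : x1 = y1
    · subst h
      have hx2 : x2 ≠ y2 := fun h => hxy (by rw [h])
      obtain ⟨b, hbB, hb⟩ := hB x2 y2 hx2
      refine ⟨(x1, b), Or.inr ⟨Set.mem_univ _, hbB⟩, ?_⟩
      rw [hdist, hdist, SimpleGraph.dist_self]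
      simpa using hb
    · obtain ⟨a, haA, ha⟩ := hA x1 y1 h
      rcases Nat.lt_or_ge (G.dist x1 a) (G.dist y1 a) with hlt | hge
      · refine ⟨(a, x2), Or.inl ⟨haA, Set.mem_univ _⟩, ?_⟩
        rw [hdist, hdist, SimpleGraph.dist_self, Nat.max_zero]
        exact Nat.ne_of_lt (lt_of_lt_of_le hlt le_sup_left)
      · have hlt : G.dist y1 a < G.dist x1 a := by omega
        refine ⟨(a, y2), Or.inl ⟨haA, Set.mem_univ _⟩, ?_⟩
        rw [hdist, hdist, SimpleGraph.dist_self, Nat.max_zero]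
        exact (Nat.ne_of_lt (lt_of_lt_of_le hlt le_sup_left)).symm
  have hdim : metricDim (strongProd G H) ≤ S.ncard := Nat.sInf_le ⟨S, hgen, rfl⟩
  have hinter : (A ×ˢ (Set.univ : Set β)) ∩ ((Set.univ : Set α) ×ˢ B) = A ×ˢ B := by
    ext ⟨a, b⟩; simp
  have hcard : S.ncard + A.ncard * B.ncard =
      A.ncard * Fintype.card β + Fintype.card α * B.ncard := by
    rw [hS, ← ncard_prod A B, ← hinter]
    rw [Set.ncard_union_add_ncard_inter _ _ (Set.toFinite _) (Set.toFinite _)]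
    rw [ncard_prod, ncard_prod, Set.ncard_univ, Set.ncard_univ,
      Nat.card_eq_fintype_card, Nat.card_eq_fintype_card]
  have hAle : A.ncard ≤ Fintype.card α := by
    have := Set.ncard_le_ncard (Set.subset_univ A) Set.finite_univ
    simpa [Set.ncard_univ, Nat.card_eq_fintype_card] using this
  rw [← hAcard, ← hBcard]
  have h2 : A.ncard * B.ncard ≤ Fintype.card α * B.ncard :=
    Nat.mul_le_mul_right _ hAle
  have h3 : A.ncard * Fintype.card β = Fintype.card β * A.ncard := Nat.mul_comm _ _
  set p := A.ncard * Fintype.card β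
  set q := Fintype.card α * B.ncard
  set r := A.ncard * B.ncard
  set s := Fintype.card β * A.ncard
  omega
end

section
/- For integers n1 ≥ 2 and n2 ≥ 4 with n1 − 1 < ⌊n2/2⌋, the metric dimension of the strong product of the path P_{n1} and the cycle C_{n2} satisfies dim(P_{n1} ⊠ C_{n2}) ≤ n2. -/
open SimpleGraph

/-! ### Auxiliary lemmas -/

/-- A 1-Lipschitz (along edges) function is bounded by walk lengths. -/
lemma aux_walk_le_length {α : Type*} {G : SimpleGraph α} (f : α → ℕ)
    (hf : ∀ ⦃x y⦄, G.Adj x y → f y ≤ f x + 1) :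
    ∀ {u v : α} (w : G.Walk u v), f v ≤ f u + w.length := by
  intro u v w
  induction w with
  | nil => simp
  | @cons u x v h p ih =>
    have h1 := hf h
    simp only [SimpleGraph.Walk.length_cons]
    omega

lemma aux_lipschitz_le_dist {α : Type*} {G : SimpleGraph α} (f : α → ℕ)
    (hf : ∀ ⦃x y⦄, G.Adj x y → f y ≤ f x + 1) {u v : α} (hr : G.Reachable u v) :
    f v ≤ f u + G.dist u v := by
  obtain ⟨w, hw⟩ := hr.exists_walk_length_eq_dist
  simpa [hw] using aux_walk_le_length f hf w

/-- Distance to `0` in the path graph. -/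
lemma aux_path_dist_le (n : ℕ) : ∀ (k : ℕ) (a : Fin (n + 1)), a.val = k →
    (pathGraph (n + 1)).dist a 0 ≤ k := by
  intro k
  induction k with
  | zero =>
    intro a ha
    have : a = 0 := Fin.ext (by simpa using ha)
    simp [this]
  | succ k ih =>
    intro a ha
    have hk : k < n + 1 := by omega
    set a' : Fin (n + 1) := ⟨k, hk⟩ with ha'
    have hadj : (pathGraph (n + 1)).Adj a a' := by
      rw [pathGraph_adj]
      right
      simp [ha', ha]
    calc (pathGraph (n + 1)).dist a 0
        ≤ (pathGraph (n + 1)).dist a a' + (pathGraph (n + 1)).dist a' 0 :=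
          (pathGraph_connected n).dist_triangle
      _ ≤ 1 + k := by
          gcongr
          · exact dist_le hadj.toWalk
          · exact ih a' rfl
      _ = k + 1 := by omega

lemma aux_path_dist (n : ℕ) (a : Fin (n + 1)) :
    (pathGraph (n + 1)).dist a 0 = a.val := by
  refine le_antisymm (aux_path_dist_le n a.val a rfl) ?_
  have hf : ∀ ⦃x y : Fin (n+1)⦄, (pathGraph (n+1)).Adj x y →
      a.val - y.val ≤ (a.val - x.val) + 1 := by
    intro x y hxy
    rw [pathGraph_adj] at hxy
    omega
  have := aux_lipschitz_le_dist (fun z => a.val - z.val) hf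
    ((pathGraph_connected n) a 0)
  simpa using this

section Cycle

variable {n : ℕ}

lemma aux_cyc_connected (hn : 4 ≤ n) : (cycleGraph n).Connected := by
  obtain ⟨m, rfl⟩ : ∃ m, n = m + 1 := ⟨n - 1, by omega⟩
  exact cycleGraph_connected

/-- Upper bound: walking one way around the cycle. -/
lemma aux_cyc_dist_le (hn : 4 ≤ n) : ∀ (k : ℕ) (x y : Fin n), (y - x).val = k →
    (cycleGraph n).dist x y ≤ k := by
  haveI : NeZero n := ⟨by omega⟩
  intro k
  induction k with
  | zero =>
    intro x y hk
    have : y - x = 0 := Fin.ext (by simpa using hk)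
    have : y = x := by
      have := sub_eq_zero.mp this
      exact this
    simp [this]
  | succ k ih =>
    intro x y hk
    set one : Fin n := ⟨1, by omega⟩ with hone
    set y' : Fin n := y - one with hy'
    have hsub : y - y' = one := sub_sub_cancel y one
    have hadj : (cycleGraph n).Adj y' y := by
      rw [cycleGraph_adj']
      right
      rw [hsub]
    have hky' : (y' - x).val = k := by
      have h1 : y' - x = (y - x) - one := by rw [hy']; abel
      have hvlt : (y - x).val < n := (y - x).isLt
      rw [h1, Fin.sub_def]
      simp only [hone]
      have : n - 1 + (y - x).val = n + k := by omega
      rw [Nat.add_comm (n-1), ← Nat.add_sub_assoc (by omega)]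
      have : (y - x).val + n - 1 = n + k := by omega
      rw [this, Nat.add_mod_left]
      exact Nat.mod_eq_of_lt (by omega)
    calc (cycleGraph n).dist x y
        ≤ (cycleGraph n).dist x y' + (cycleGraph n).dist y' y :=
          (aux_cyc_connected hn).dist_triangle
      _ ≤ k + 1 := by
          gcongr
          · exact ih x y' hky'
          · exact dist_le hadj.toWalk

/-- Key numeric step lemma. -/
lemma aux_step (hn : 4 ≤ n) {p q : ℕ} (hp : p < n) (hq : q < n)
    (h : q = (p + 1) % n ∨ p = (q + 1) % n) :
    min q (n - q) ≤ min p (n - p) + 1 := by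
  rcases h with h | h
  · rcases Nat.lt_or_ge (p + 1) n with h1 | h1
    · rw [Nat.mod_eq_of_lt h1] at h
      omega
    · have hp1 : p + 1 = n := by omega
      rw [hp1, Nat.mod_self] at h
      omega
  · rcases Nat.lt_or_ge (q + 1) n with h1 | h1
    · rw [Nat.mod_eq_of_lt h1] at h
      omega
    · have hq1 : q + 1 = n := by omega
      rw [hq1, Nat.mod_self] at h
      omega

/-- The distance formula in the cycle graph. -/
lemma aux_cyc_dist (hn : 4 ≤ n) (x y : Fin n) :
    (cycleGraph n).dist x y = min ((y - x).val) (n - (y - x).val) := by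
  haveI : NeZero n := ⟨by omega⟩
  refine le_antisymm ?_ ?_
  · refine le_min (aux_cyc_dist_le hn _ x y rfl) ?_
    rcases Nat.eq_zero_or_pos ((y - x).val) with h0 | h0
    · have : y = x := sub_eq_zero.mp (Fin.ext (by simpa using h0))
      simp [this, SimpleGraph.dist_self]
    · have hxy : (x - y).val = n - (y - x).val := by
        have h1 : x - y = -(y - x) := by abel
        rw [h1, Fin.neg_def]
        exact Nat.mod_eq_of_lt (by omega)
      rw [SimpleGraph.dist_comm]
      exact aux_cyc_dist_le hn _ y x hxy
  · set f : Fin n → ℕ := fun z => min ((z - x).val) (n - (z - x).val) with hf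
    have hlip : ∀ ⦃z w : Fin n⦄, (cycleGraph n).Adj z w → f z + 1 ≥ f w := by
      intro z w hzw
      rw [cycleGraph_adj'] at hzw
      have hz : (z - x).val < n := (z - x).isLt
      have hw : (w - x).val < n := (w - x).isLt
      rcases hzw with h | h
      · -- z - w has val 1, so z = w + 1, w = z - 1 : p = (q+1)%n with p = z-x, q = w-x
        have : z - x = (w - x) + (z - w) := by abel
        have hval : (z - x).val = ((w - x).val + 1) % n := by
          rw [this, Fin.val_add, h]
        exact aux_step hn hz hw (Or.inr hval)
      · have : w - x = (z - x) + (w - z) := by abel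
        have hval : (w - x).val = ((z - x).val + 1) % n := by
          rw [this, Fin.val_add, h]
        exact aux_step hn hz hw (Or.inl hval)
    have hfx : f x = 0 := by simp [hf]
    have := aux_lipschitz_le_dist f hlip ((aux_cyc_connected hn) x y)
    rw [hfx] at this
    simpa [hf] using this

/-- Existence of a resolving landmark on the cycle. -/
lemma aux_cyc_exists (hn : 4 ≤ n) (b d : Fin n) (hbd : d ≠ b) :
    ∃ j : Fin n, (cycleGraph n).dist b j = n / 2 ∧ (cycleGraph n).dist d j < n / 2 := by
  haveI : NeZero n := ⟨by omega⟩
  set m : ℕ := n / 2 with hm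
  set M : Fin n := ⟨m, by omega⟩ with hM
  have hMval : M.val = m := rfl
  have hnegM : (-M).val = n - m := by
    rw [Fin.neg_def, hMval]
    exact Nat.mod_eq_of_lt (by omega)
  have hub : ∀ z j : Fin n, (cycleGraph n).dist z j ≤ m := by
    intro z j
    rw [aux_cyc_dist hn]
    have := (j - z).isLt
    omega
  have hbj : ∀ s : Fin n, ((b + s) - b) = s := by intro s; abel
  have hdist_b : ∀ s : Fin n, s.val = m ∨ s.val = n - m →
      (cycleGraph n).dist b (b + s) = m := by
    intro s hs
    rw [aux_cyc_dist hn, hbj]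
    rcases hs with hs | hs <;> rw [hs] <;> omega
  -- candidates
  have hcand : ∀ s : Fin n, (cycleGraph n).dist d (b + s) = m →
      (b + s) - d = M ∨ (b + s) - d = -M := by
    intro s hs
    rw [aux_cyc_dist hn] at hs
    have hlt : ((b + s) - d).val < n := ((b + s) - d).isLt
    have : ((b + s) - d).val = m ∨ ((b + s) - d).val = n - m := by omega
    rcases this with h | h
    · exact Or.inl (Fin.ext (by rw [h, hMval]))
    · exact Or.inr (Fin.ext (by rw [h, hnegM]))
  have key : ∀ s : Fin n, (b + s) - d = M → d = b + s - M := by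
    intro s h
    have := congrArg (fun t => (b + s) - t) h
    simpa using this
  have key' : ∀ s : Fin n, (b + s) - d = -M → d = b + s + M := by
    intro s h
    have := congrArg (fun t => (b + s) - t) h
    simp only [sub_sub_cancel, sub_neg_eq_add] at this
    exact this
  by_cases h1 : (cycleGraph n).dist d (b + M) = m
  · by_cases h2 : (cycleGraph n).dist d (b + -M) = m
    · exfalso
      rcases hcand M h1 with hA | hA
      · exact hbd (by simpa using key M hA)
      · have hd1 : d = b + M + M := key' M hA
        rcases hcand (-M) h2 with hB | hB
        · have hd2 : d = b + -M - M := key (-M) hB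
          -- b + M + M = b - M - M  →  (M+M)+(M+M)=0
          have h4 : (M + M) + (M + M) = 0 := by
            have h6 := hd1.symm.trans hd2
            rw [← sub_eq_zero] at h6
            rw [← h6]
            abel
          have hMM : (M + M).val = (m + m) % n := Fin.val_add M M
          rcases Nat.lt_or_ge (m + m) n with hlt | hge
          · -- n odd: m + m = n - 1
            have hodd : m + m = n - 1 := by omega
            have hv : (M + M).val = n - 1 := by rw [hMM]; rw [hodd]; exact Nat.mod_eq_of_lt (by omega)
            have hv4 : ((M + M) + (M + M)).val = n - 2 := by
              rw [Fin.val_add, hv]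
              have : n - 1 + (n - 1) = n + (n - 2) := by omega
              rw [this, Nat.add_mod_left]
              exact Nat.mod_eq_of_lt (by omega)
            rw [h4] at hv4
            simp at hv4
            omega
          · -- n even: m + m = n, M + M = 0
            have heven : m + m = n := by omega
            have hv : (M + M) = 0 := by
              apply Fin.ext
              rw [hMM, heven, Nat.mod_self]
              simp
            have hd1' : d = b + (M + M) := by rw [hd1]; abel
            rw [hv] at hd1'
            exact hbd (by simpa using hd1')
        · have hd2 : d = b + -M + M := key' (-M) hB
          have : d = b := by rw [hd2]; abel
          exact hbd this
    · refine ⟨b + -M, hdist_b (-M) (Or.inr hnegM), ?_⟩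
      have := hub d (b + -M)
      omega
  · refine ⟨b + M, hdist_b M (Or.inl hMval), ?_⟩
    have := hub d (b + M)
    omega

end Cycle

section StrongProd

variable {α β : Type*} {G : SimpleGraph α} {H : SimpleGraph β}

lemma aux_strong_walk : ∀ {b d : β} (q : H.Walk b d) {a c : α} (p : G.Walk a c),
    p.length ≤ q.length →
    ∃ w : (strongProd G H).Walk (a, b) (c, d), w.length = q.length := by
  intro b d q
  induction q with
  | nil =>
    intro a c p hp
    have h0 : p.length = 0 := Nat.le_zero.mp (by simpa using hp)
    have : a = c := SimpleGraph.Walk.eq_of_length_eq_zero h0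
    subst this
    exact ⟨SimpleGraph.Walk.nil, rfl⟩
  | @cons b b' d hbb' q ih =>
    intro a c p hp
    cases p with
    | nil =>
      have hadj : (strongProd G H).Adj (a, b) (a, b') := by
        refine ⟨?_, Or.inl rfl, Or.inr hbb'⟩
        simp only [ne_eq, Prod.mk.injEq, not_and]
        intro _
        exact hbb'.ne
      obtain ⟨w, hw⟩ := ih (p := SimpleGraph.Walk.nil) (by simp)
      exact ⟨SimpleGraph.Walk.cons hadj w, by simp [hw]⟩
    | @cons a a' c haa' p' =>
      have hadj : (strongProd G H).Adj (a, b) (a', b') := by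
        refine ⟨?_, Or.inr haa', Or.inr hbb'⟩
        simp only [ne_eq, Prod.mk.injEq, not_and]
        intro h
        exact absurd h haa'.ne
      obtain ⟨w, hw⟩ := ih (p := p') (by simpa using hp)
      exact ⟨SimpleGraph.Walk.cons hadj w, by simp [hw]⟩

/-- Graph hom swapping the factors of a strong product. -/
def auxSwapHom : strongProd H G →g strongProd G H where
  toFun := Prod.swap
  map_rel' := by
    rintro ⟨a, b⟩ ⟨c, d⟩ ⟨hne, h1, h2⟩
    exact ⟨fun hsw => hne (Prod.swap_injective hsw), h2, h1⟩

lemma aux_strong_dist (hG : G.Connected) (hH : H.Connected) (a c : α) (b d : β) :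
    (strongProd G H).dist (a, b) (c, d) = max (G.dist a c) (H.dist b d) := by
  obtain ⟨p, hp⟩ := hG.exists_walk_length_eq_dist a c
  obtain ⟨q, hq⟩ := hH.exists_walk_length_eq_dist b d
  have hle : (strongProd G H).dist (a, b) (c, d) ≤ max (G.dist a c) (H.dist b d) := by
    rcases le_total p.length q.length with hpq | hpq
    · obtain ⟨w, hw⟩ := aux_strong_walk q p hpq
      calc (strongProd G H).dist (a, b) (c, d) ≤ w.length := dist_le w
        _ = q.length := hw
        _ ≤ max (G.dist a c) (H.dist b d) := by rw [hq]; exact le_max_right _ _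
    · obtain ⟨w, hw⟩ := aux_strong_walk (G := H) (H := G) p q hpq
      calc (strongProd G H).dist (a, b) (c, d)
          ≤ ((w.map (auxSwapHom (G := G) (H := H))).copy rfl rfl).length := dist_le _
        _ = p.length := by
            rw [SimpleGraph.Walk.length_copy, SimpleGraph.Walk.length_map]; exact hw
        _ ≤ max (G.dist a c) (H.dist b d) := by rw [hp]; exact le_max_left _ _
  refine le_antisymm hle ?_
  have hreach : (strongProd G H).Reachable (a, b) (c, d) := by
    rcases le_total p.length q.length with hpq | hpq
    · obtain ⟨w, _⟩ := aux_strong_walk q p hpq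
      exact ⟨w⟩
    · obtain ⟨w, _⟩ := aux_strong_walk (G := H) (H := G) p q hpq
      exact ⟨(w.map (auxSwapHom (G := G) (H := H))).copy rfl rfl⟩
  refine max_le ?_ ?_
  · have hf : ∀ ⦃x y : α × β⦄, (strongProd G H).Adj x y →
        G.dist a y.1 ≤ G.dist a x.1 + 1 := by
      rintro x y ⟨-, h1, -⟩
      rcases h1 with h | h
      · rw [h]; omega
      · calc G.dist a y.1 ≤ G.dist a x.1 + G.dist x.1 y.1 := hG.dist_triangle
          _ ≤ G.dist a x.1 + 1 := by
            have : G.dist x.1 y.1 ≤ 1 := by simpa using dist_le h.toWalk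
            omega
    have := aux_lipschitz_le_dist (fun z => G.dist a z.1) hf hreach
    simpa [SimpleGraph.dist_self] using this
  · have hf : ∀ ⦃x y : α × β⦄, (strongProd G H).Adj x y →
        H.dist b y.2 ≤ H.dist b x.2 + 1 := by
      rintro x y ⟨-, -, h2⟩
      rcases h2 with h | h
      · rw [h]; omega
      · calc H.dist b y.2 ≤ H.dist b x.2 + H.dist x.2 y.2 := hH.dist_triangle
          _ ≤ H.dist b x.2 + 1 := by
            have : H.dist x.2 y.2 ≤ 1 := by simpa using dist_le h.toWalk
            omega
    have := aux_lipschitz_le_dist (fun z => H.dist b z.2) hf hreach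
    simpa [SimpleGraph.dist_self] using this

end StrongProd

theorem stmt_5 (n1 n2 : ℕ) (h1 : 2 ≤ n1) (h2 : 4 ≤ n2)
    (h : n1 - 1 < n2 / 2) :
    metricDim (strongProd (SimpleGraph.pathGraph n1) (SimpleGraph.cycleGraph n2)) ≤ n2 := by
  obtain ⟨m1, rfl⟩ : ∃ m, n1 = m + 1 := ⟨n1 - 1, by omega⟩
  have hGconn : (pathGraph (m1 + 1)).Connected := pathGraph_connected m1
  have hHconn : (cycleGraph n2).Connected := aux_cyc_connected h2
  set S : Set (Fin (m1 + 1) × Fin n2) := (fun j => ((0 : Fin (m1 + 1)), j)) '' Set.univ with hS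
  have hdist : ∀ (a : Fin (m1 + 1)) (b j : Fin n2),
      (strongProd (pathGraph (m1 + 1)) (cycleGraph n2)).dist (a, b) (0, j)
        = max a.val ((cycleGraph n2).dist b j) := by
    intro a b j
    rw [aux_strong_dist hGconn hHconn, aux_path_dist]
  have hvlt : ∀ a : Fin (m1 + 1), a.val < n2 / 2 := by
    intro a
    have := a.isLt
    omega
  have hgen : IsMetricGen (strongProd (pathGraph (m1 + 1)) (cycleGraph n2)) S := by
    rintro ⟨a, b⟩ ⟨c, d⟩ hne
    by_cases hbd : b = d
    · subst hbd
      have hac : a ≠ c := fun hac => hne (by rw [hac])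
      refine ⟨(0, b), ⟨b, Set.mem_univ b, rfl⟩, ?_⟩
      rw [hdist a b b, hdist c b b]
      simp only [dist_self]
      simp only [Nat.max_zero]
      exact fun hh => hac (Fin.ext hh)
    · obtain ⟨j, hj1, hj2⟩ := aux_cyc_exists h2 b d (Ne.symm hbd)
      refine ⟨(0, j), ⟨j, Set.mem_univ j, rfl⟩, ?_⟩
      rw [hdist a b j, hdist c d j, hj1]
      have ha := hvlt a
      have hc := hvlt c
      omega
  have hcard : S.ncard = n2 := by
    rw [hS, Set.ncard_image_of_injective _ (fun x y hxy => (Prod.mk.injEq _ _ _ _).mp hxy |>.2)]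
    simp [Set.ncard_univ]
  exact Nat.sInf_le ⟨S, hgen, hcard⟩
end

section
/- Let G and H be nontrivial connected graphs of orders n1, n2 with t1, t2 true twin equivalence classes. If dim(G) = n1 − t1 and dim(H) = n2 − t2, then dim(G ⊠ H) = n1·n2 − t1·t2. -/
open SimpleGraph

section Aux

variable {α β : Type*}

lemma TrueTwins.adj {G : SimpleGraph α} {u v : α} (h : TrueTwins G u v) (hne : u ≠ v) :
    G.Adj u v := by
  have hu : u ∈ insert v (G.neighborSet v) := h ▸ Set.mem_insert u _
  rcases Set.mem_insert_iff.mp hu with h' | h'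
  · exact absurd h' hne
  · exact h'.symm

lemma dist_le_of_trueTwins {G : SimpleGraph α} {u v s : α} (h : TrueTwins G u v)
    (hne : u ≠ v) (hsu : s ≠ u) (hr : G.Reachable u s) :
    G.dist v s ≤ G.dist u s := by
  obtain ⟨p, hp⟩ := hr.exists_walk_length_eq_dist
  cases p with
  | nil => exact absurd rfl hsu.symm
  | @cons _ x _ h' q =>
    rw [Walk.length_cons] at hp
    by_cases hxv : x = v
    · subst hxv
      have := SimpleGraph.dist_le q
      omega
    · have hx : x ∈ insert v (G.neighborSet v) := h ▸ Set.mem_insert_of_mem u h'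
      have hadj : G.Adj v x := by
        rcases Set.mem_insert_iff.mp hx with h'' | h''
        · exact absurd h'' hxv
        · exact h''
      have := SimpleGraph.dist_le (Walk.cons hadj q)
      rw [Walk.length_cons] at this
      omega

lemma dist_eq_of_trueTwins {G : SimpleGraph α} {u v s : α} (h : TrueTwins G u v)
    (hne : u ≠ v) (hsu : s ≠ u) (hsv : s ≠ v) (hr : G.Reachable u s) :
    G.dist u s = G.dist v s := by
  have hrv : G.Reachable v s := ((h.adj hne).symm.reachable).trans hr
  exact le_antisymm (dist_le_of_trueTwins h.symm hne.symm hsv hrv)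
    (dist_le_of_trueTwins h hne hsu hr)

lemma closedNbhd_strongProd (G : SimpleGraph α) (H : SimpleGraph β) (x : α × β) :
    insert x ((strongProd G H).neighborSet x) =
      (insert x.1 (G.neighborSet x.1)) ×ˢ (insert x.2 (H.neighborSet x.2)) := by
  ext ⟨a, b⟩
  simp only [Set.mem_insert_iff, mem_neighborSet, Set.mem_prod]
  constructor
  · rintro (rfl | ⟨hne, h1, h2⟩)
    · exact ⟨Or.inl rfl, Or.inl rfl⟩
    · constructor
      · rcases h1 with h | h
        · exact Or.inl h.symm
        · exact Or.inr h
      · rcases h2 with h | h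
        · exact Or.inl h.symm
        · exact Or.inr h
  · rintro ⟨h1, h2⟩
    by_cases hx : (a, b) = x
    · exact Or.inl hx
    · refine Or.inr ⟨Ne.symm hx, ?_, ?_⟩
      · rcases h1 with h | h
        · exact Or.inl h.symm
        · exact Or.inr h
      · rcases h2 with h | h
        · exact Or.inl h.symm
        · exact Or.inr h

lemma trueTwins_strongProd {G : SimpleGraph α} {H : SimpleGraph β} {u v : α × β}
    (h1 : TrueTwins G u.1 v.1) (h2 : TrueTwins H u.2 v.2) :
    TrueTwins (strongProd G H) u v := by
  unfold TrueTwins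
  rw [closedNbhd_strongProd, closedNbhd_strongProd, h1, h2]

/-- One-step extraction: from `dist a c ≤ n+1`, get a next vertex. -/
lemma exists_step {G : SimpleGraph α} (hG : G.Connected) (a c : α) (n : ℕ)
    (h : G.dist a c ≤ n + 1) :
    ∃ a', (a = a' ∨ G.Adj a a') ∧ G.dist a' c ≤ n ∧ (a ≠ c → a ≠ a') := by
  by_cases hac : a = c
  · exact ⟨a, Or.inl rfl, by subst hac; simp [SimpleGraph.dist_self], fun h' => absurd hac h'⟩
  · have hpos : 0 < G.dist a c := hG.pos_dist_of_ne hac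
    obtain ⟨p, hp⟩ := (hG a c).exists_walk_length_eq_dist
    cases p with
    | nil => exact absurd rfl hac
    | @cons _ x _ h' q =>
      rw [Walk.length_cons] at hp
      have hq := SimpleGraph.dist_le q
      exact ⟨x, Or.inr h', by omega, fun _ => h'.ne⟩

lemma exists_walk_strongProd {G : SimpleGraph α} {H : SimpleGraph β}
    (hG : G.Connected) (hH : H.Connected) :
    ∀ (n : ℕ) (a c : α) (b d : β), G.dist a c ≤ n → H.dist b d ≤ n →
      ∃ w : (strongProd G H).Walk (a, b) (c, d), w.length ≤ n := by
  intro n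
  induction n with
  | zero =>
    intro a c b d h1 h2
    have hac : a = c := (hG.dist_eq_zero_iff).mp (Nat.le_zero.mp h1)
    have hbd : b = d := (hH.dist_eq_zero_iff).mp (Nat.le_zero.mp h2)
    subst hac; subst hbd
    exact ⟨Walk.nil, by simp⟩
  | succ n ih =>
    intro a c b d h1 h2
    by_cases heq : (a, b) = (c, d)
    · rw [heq]; exact ⟨Walk.nil, by simp⟩
    · obtain ⟨a', ha1, ha2, ha3⟩ := exists_step hG a c n h1
      obtain ⟨b', hb1, hb2, hb3⟩ := exists_step hH b d n h2
      have hne : (a, b) ≠ (a', b') := by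
        intro hcon
        have hab : a = a' ∧ b = b' := by simpa using hcon
        -- from heq false: a ≠ c ∨ b ≠ d
        rcases (not_and_or.mp (fun ⟨h1', h2'⟩ => heq (by rw [h1', h2']))
          : ¬(a = c) ∨ ¬(b = d)) with hc | hc
        · exact (ha3 hc) hab.1
        · exact (hb3 hc) hab.2
      have hadj : (strongProd G H).Adj (a, b) (a', b') := ⟨hne, ha1, hb1⟩
      obtain ⟨w, hw⟩ := ih a' c b' d ha2 hb2
      exact ⟨Walk.cons hadj w, by rw [Walk.length_cons]; omega⟩

lemma dist_fst_le_walk {G : SimpleGraph α} {H : SimpleGraph β} (hG : G.Connected)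
    {x y : α × β} (p : (strongProd G H).Walk x y) : G.dist x.1 y.1 ≤ p.length := by
  induction p with
  | nil => simp [SimpleGraph.dist_self]
  | @cons u z w h q ih =>
    rw [Walk.length_cons]
    have h1 : G.dist u.1 z.1 ≤ 1 := by
      rcases h.2.1 with h' | h'
      · rw [h']; simp [SimpleGraph.dist_self]
      · exact le_of_eq (SimpleGraph.dist_eq_one_iff_adj.mpr h')
    have := hG.dist_triangle (v := z.1) (u := u.1) (w := w.1)
    omega

lemma dist_snd_le_walk {G : SimpleGraph α} {H : SimpleGraph β} (hH : H.Connected)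
    {x y : α × β} (p : (strongProd G H).Walk x y) : H.dist x.2 y.2 ≤ p.length := by
  induction p with
  | nil => simp [SimpleGraph.dist_self]
  | @cons u z w h q ih =>
    rw [Walk.length_cons]
    have h1 : H.dist u.2 z.2 ≤ 1 := by
      rcases h.2.2 with h' | h'
      · rw [h']; simp [SimpleGraph.dist_self]
      · exact le_of_eq (SimpleGraph.dist_eq_one_iff_adj.mpr h')
    have := hH.dist_triangle (v := z.2) (u := u.2) (w := w.2)
    omega

lemma reachable_strongProd {G : SimpleGraph α} {H : SimpleGraph β}
    (hG : G.Connected) (hH : H.Connected) (x y : α × β) :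
    (strongProd G H).Reachable x y := by
  obtain ⟨w, -⟩ := exists_walk_strongProd hG hH (max (G.dist x.1 y.1) (H.dist x.2 y.2))
    x.1 y.1 x.2 y.2 (le_max_left _ _) (le_max_right _ _)
  exact ⟨(by convert w)⟩

lemma dist_strongProd {G : SimpleGraph α} {H : SimpleGraph β}
    (hG : G.Connected) (hH : H.Connected) (a c : α) (b d : β) :
    (strongProd G H).dist (a, b) (c, d) = max (G.dist a c) (H.dist b d) := by
  apply le_antisymm
  · obtain ⟨w, hw⟩ := exists_walk_strongProd hG hH (max (G.dist a c) (H.dist b d))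
      a c b d (le_max_left _ _) (le_max_right _ _)
    exact (SimpleGraph.dist_le w).trans hw
  · obtain ⟨p, hp⟩ := (reachable_strongProd hG hH (a, b) (c, d)).exists_walk_length_eq_dist
    rw [← hp]
    exact max_le (dist_fst_le_walk hG p) (dist_snd_le_walk hH p)

end Aux

theorem stmt_10 {α β : Type*} [Fintype α] [Fintype β] [Nontrivial α] [Nontrivial β]
    (G : SimpleGraph α) (H : SimpleGraph β) (hG : G.Connected) (hH : H.Connected)
    (hdG : metricDim G = Fintype.card α - numTrueTwinClasses G)
    (hdH : metricDim H = Fintype.card β - numTrueTwinClasses H) :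
    metricDim (strongProd G H) =
      Fintype.card α * Fintype.card β - numTrueTwinClasses G * numTrueTwinClasses H := by
  classical
  -- univ is always a generator of a connected graph, so the defining sets are nonempty
  have hunivG : IsMetricGen G Set.univ := by
    intro x y hxy
    exact ⟨x, Set.mem_univ x, by
      rw [SimpleGraph.dist_self]
      exact fun hc => hxy (hG.dist_eq_zero_iff.mp hc.symm).symm⟩
  have hunivH : IsMetricGen H Set.univ := by
    intro x y hxy
    exact ⟨x, Set.mem_univ x, by
      rw [SimpleGraph.dist_self]
      exact fun hc => hxy (hH.dist_eq_zero_iff.mp hc.symm).symm⟩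
  -- extract minimum generators for G and H
  obtain ⟨SG, hSGgen, hSGcard⟩ :=
    Nat.sInf_mem (⟨_, Set.univ, hunivG, rfl⟩ :
      {n | ∃ S : Set α, IsMetricGen G S ∧ S.ncard = n}.Nonempty)
  obtain ⟨SH, hSHgen, hSHcard⟩ :=
    Nat.sInf_mem (⟨_, Set.univ, hunivH, rfl⟩ :
      {n | ∃ S : Set β, IsMetricGen H S ∧ S.ncard = n}.Nonempty)
  rw [show sInf {n | ∃ S : Set α, IsMetricGen G S ∧ S.ncard = n} = metricDim G from rfl, hdG]
    at hSGcard
  rw [show sInf {n | ∃ S : Set β, IsMetricGen H S ∧ S.ncard = n} = metricDim H from rfl, hdH]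
    at hSHcard
  -- numTrueTwinClasses G ≤ Fintype.card α, numTrueTwinClasses H ≤ Fintype.card β
  have ht1 : numTrueTwinClasses G ≤ Fintype.card α := by
    have := Nat.card_le_card_of_surjective
      (Quotient.mk (Setoid.ker (fun v => insert v (G.neighborSet v))))
      (Quot.exists_rep)
    simpa [numTrueTwinClasses, Nat.card_eq_fintype_card] using this
  have ht2 : numTrueTwinClasses H ≤ Fintype.card β := by
    have := Nat.card_le_card_of_surjective
      (Quotient.mk (Setoid.ker (fun v => insert v (H.neighborSet v))))
      (Quot.exists_rep)
    simpa [numTrueTwinClasses, Nat.card_eq_fintype_card] using this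
  -- complements
  have hWGcard : SGᶜ.ncard = numTrueTwinClasses G := by
    have := Set.ncard_add_ncard_compl SG
    rw [Nat.card_eq_fintype_card] at this
    omega
  have hWHcard : SHᶜ.ncard = numTrueTwinClasses H := by
    have := Set.ncard_add_ncard_compl SH
    rw [Nat.card_eq_fintype_card] at this
    omega
  -- the candidate generator for the product
  set S : Set (α × β) := (SGᶜ ×ˢ SHᶜ)ᶜ with hS
  have hprodcard : (SGᶜ ×ˢ SHᶜ).ncard = numTrueTwinClasses G * numTrueTwinClasses H := by
    rw [← Nat.card_coe_set_eq, Nat.card_congr (Equiv.Set.prod SGᶜ SHᶜ), Nat.card_prod,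
      Nat.card_coe_set_eq, Nat.card_coe_set_eq, hWGcard, hWHcard]
  have hScard : S.ncard = Fintype.card α * Fintype.card β - numTrueTwinClasses G * numTrueTwinClasses H := by
    have := Set.ncard_add_ncard_compl (SGᶜ ×ˢ SHᶜ)
    rw [Nat.card_eq_fintype_card, Fintype.card_prod, hprodcard, ← hS] at this
    omega
  have hSgen : IsMetricGen (strongProd G H) S := by
    rintro ⟨a, b⟩ ⟨c, d⟩ hne
    by_cases hac : a = c
    · subst hac
      have hbd : b ≠ d := fun h => hne (by rw [h])
      obtain ⟨t, htS, hdist⟩ := hSHgen b d hbd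
      refine ⟨(a, t), ?_, ?_⟩
      · simp only [hS, Set.mem_compl_iff, Set.mem_prod, not_and]
        intro _; exact fun h => h htS
      · rw [dist_strongProd hG hH, dist_strongProd hG hH, SimpleGraph.dist_self]
        simpa using hdist
    · obtain ⟨s, hsS, hdist⟩ := hSGgen a c hac
      have hsW : s ∉ SGᶜ := fun h => h hsS
      rcases hdist.lt_or_gt with hlt | hlt
      · refine ⟨(s, b), ?_, ?_⟩
        · simp only [hS, Set.mem_compl_iff, Set.mem_prod, not_and]
          exact fun h => absurd h hsW
        · rw [dist_strongProd hG hH, dist_strongProd hG hH, SimpleGraph.dist_self]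
          have h1 : max (G.dist a s) 0 = G.dist a s := by omega
          have h2 : G.dist c s ≤ max (G.dist c s) (H.dist d b) := le_max_left _ _
          omega
      · refine ⟨(s, d), ?_, ?_⟩
        · simp only [hS, Set.mem_compl_iff, Set.mem_prod, not_and]
          exact fun h => absurd h hsW
        · rw [dist_strongProd hG hH, dist_strongProd hG hH, SimpleGraph.dist_self]
          have h1 : max (G.dist c s) 0 = G.dist c s := by omega
          have h2 : G.dist a s ≤ max (G.dist a s) (H.dist b d) := le_max_left _ _
          omega
  -- lower bound: any metric generator of the product has at least Fintype.card α*Fintype.card β - numTrueTwinClasses G*numTrueTwinClasses H elements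
  have hlb : ∀ T : Set (α × β), IsMetricGen (strongProd G H) T →
      Fintype.card α * Fintype.card β - numTrueTwinClasses G * numTrueTwinClasses H ≤ T.ncard := by
    intro T hT
    have hinj : Function.Injective
        (fun w : ↥(Tᶜ) =>
          ((Quotient.mk (Setoid.ker (fun v => insert v (G.neighborSet v))) w.1.1),
           (Quotient.mk (Setoid.ker (fun v => insert v (H.neighborSet v))) w.1.2))) := by
      rintro ⟨w, hw⟩ ⟨w', hw'⟩ h
      simp only [Prod.mk.injEq, Quotient.eq] at h
      have h1 : TrueTwins G w.1 w'.1 := h.1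
      have h2 : TrueTwins H w.2 w'.2 := h.2
      by_contra hcon
      have hww : w ≠ w' := fun h => hcon (Subtype.ext h)
      have htw : TrueTwins (strongProd G H) w w' := trueTwins_strongProd h1 h2
      obtain ⟨s, hsT, hd⟩ := hT w w' hww
      have hsw : s ≠ w := fun h => hw (h ▸ hsT)
      have hsw' : s ≠ w' := fun h => hw' (h ▸ hsT)
      exact hd (dist_eq_of_trueTwins htw hww hsw hsw'
        (reachable_strongProd hG hH w s))
    have hcard : (Tᶜ).ncard ≤ numTrueTwinClasses G * numTrueTwinClasses H := by
      have := Nat.card_le_card_of_injective _ hinj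
      rwa [Nat.card_coe_set_eq, Nat.card_prod] at this
    have := Set.ncard_add_ncard_compl T
    rw [Nat.card_eq_fintype_card, Fintype.card_prod] at this
    omega
  -- conclude
  apply le_antisymm
  · exact Nat.sInf_le ⟨S, hSgen, hScard⟩
  · exact le_csInf ⟨_, S, hSgen, rfl⟩ (by rintro n ⟨T, hT, rfl⟩; exact hlb T hT)
end

section
/- A nontrivial connected graph is self 2-resolved if and only if it has no pair of true twin vertices. -/
open SimpleGraph

lemma twin_dist_le {α : Type*} {G : SimpleGraph α} (hG : G.Connected) {a b : α}
    (h : TrueTwins G a b) (hab : a ≠ b) {w : α} (hwa : w ≠ a) :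
    G.dist b w ≤ G.dist a w := by
  obtain ⟨p, hp⟩ := hG.exists_walk_length_eq_dist a w
  cases p with
  | nil => exact absurd rfl hwa.symm
  | cons hadj q =>
    rename_i z
    by_cases hz : z = b
    · have h1 : G.dist z w ≤ q.length := SimpleGraph.dist_le q
      have h1' : G.dist b w = G.dist z w := by rw [hz]
      have h2 : q.length + 1 = G.dist a w := by rw [← hp]; simp
      omega
    · have hzb : G.Adj b z := by
        have hz1 : z ∈ insert b (G.neighborSet b) := by
          rw [← h]; exact Set.mem_insert_of_mem _ hadj
        rcases hz1 with h1 | h1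
        · exact absurd h1 hz
        · exact h1
      calc G.dist b w ≤ (SimpleGraph.Walk.cons hzb q).length := SimpleGraph.dist_le _
        _ = _ := by rw [← hp]; simp

lemma twin_dist_eq {α : Type*} {G : SimpleGraph α} (hG : G.Connected) {a b : α}
    (h : TrueTwins G a b) (hab : a ≠ b) {w : α} (hwa : w ≠ a) (hwb : w ≠ b) :
    G.dist a w = G.dist b w :=
  le_antisymm (twin_dist_le hG (h.symm) hab.symm hwb) (twin_dist_le hG h hab hwa)

theorem stmt_13 {α : Type*} [Nontrivial α] (G : SimpleGraph α) (hG : G.Connected) :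
    SelfResolved G 2 ↔ ∀ u v : α, TrueTwins G u v → u = v := by
  constructor
  · intro hsr u v htw
    by_contra huv
    have hadj : G.Adj u v := by
      have : v ∈ insert u (G.neighborSet u) := by
        rw [htw]; exact Set.mem_insert _ _
      rcases this with h1 | h1
      · exact absurd h1 (Ne.symm huv)
      · exact h1
    have hd1 : G.dist u v = 1 := SimpleGraph.dist_eq_one_iff_adj.mpr hadj
    have hd1' : G.dist v u = 1 := SimpleGraph.dist_eq_one_iff_adj.mpr hadj.symm
    obtain ⟨w, hw | hw⟩ := hsr u v huv
    · have hwv : w ≠ v := by rintro rfl; simp [SimpleGraph.dist_self] at hw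
      have hwu : w ≠ u := by rintro rfl; omega
      have := twin_dist_eq hG htw huv hwu hwv
      omega
    · have hwu : w ≠ u := by rintro rfl; simp [SimpleGraph.dist_self] at hw
      have hwv : w ≠ v := by rintro rfl; omega
      have := twin_dist_eq hG htw huv hwu hwv
      omega
  · intro htw x y hxy
    by_cases hadj : G.Adj x y
    · have hne : insert x (G.neighborSet x) ≠ insert y (G.neighborSet y) :=
        fun h => hxy (htw x y h)
      have : ∃ w, (w ∈ insert x (G.neighborSet x) ∧ w ∉ insert y (G.neighborSet y)) ∨
          (w ∈ insert y (G.neighborSet y) ∧ w ∉ insert x (G.neighborSet x)) := by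
        by_contra hc
        push_neg at hc
        exact hne (Set.ext fun w => ⟨fun h => ((hc w).1 h), fun h => ((hc w).2 h)⟩)
      obtain ⟨w, ⟨hmem, hnmem⟩ | ⟨hmem, hnmem⟩⟩ := this
      · -- w ∈ N[x], w ∉ N[y]
        have hwy : w ≠ y := fun h => hnmem (h ▸ Set.mem_insert _ _)
        have hnady : ¬ G.Adj y w := fun h => hnmem (Set.mem_insert_of_mem _ h)
        have hwx : w ≠ x := by
          rintro rfl
          exact hnmem (Set.mem_insert_of_mem _ hadj.symm)
        have hadx : G.Adj x w := by
          rcases hmem with h1 | h1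
          · exact absurd h1 hwx
          · exact h1
        have hd2 : 2 ≤ G.dist y w := by
          have h0 : G.dist y w ≠ 0 := (hG.pos_dist_of_ne hwy.symm).ne'
          have h1 : G.dist y w ≠ 1 := fun h =>
            hnady (SimpleGraph.dist_eq_one_iff_adj.mp h)
          omega
        have hle : G.dist y w ≤ 2 := by
          have := hG.dist_triangle (u := y) (v := x) (w := w)
          rw [SimpleGraph.dist_eq_one_iff_adj.mpr hadj.symm,
            SimpleGraph.dist_eq_one_iff_adj.mpr hadx] at this
          omega
        refine ⟨w, Or.inl ⟨hd2, ?_⟩⟩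
        rw [SimpleGraph.dist_eq_one_iff_adj.mpr hadj.symm,
          SimpleGraph.dist_eq_one_iff_adj.mpr hadx]
        omega
      · -- symmetric
        have hwx : w ≠ x := fun h => hnmem (h ▸ Set.mem_insert _ _)
        have hnadx : ¬ G.Adj x w := fun h => hnmem (Set.mem_insert_of_mem _ h)
        have hwy : w ≠ y := by
          rintro rfl
          exact hnmem (Set.mem_insert_of_mem _ hadj)
        have hady : G.Adj y w := by
          rcases hmem with h1 | h1
          · exact absurd h1 hwy
          · exact h1
        have hd2 : 2 ≤ G.dist x w := by
          have h0 : G.dist x w ≠ 0 := (hG.pos_dist_of_ne hwx.symm).ne'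
          have h1 : G.dist x w ≠ 1 := fun h =>
            hnadx (SimpleGraph.dist_eq_one_iff_adj.mp h)
          omega
        have hle : G.dist x w ≤ 2 := by
          have := hG.dist_triangle (u := x) (v := y) (w := w)
          rw [SimpleGraph.dist_eq_one_iff_adj.mpr hadj,
            SimpleGraph.dist_eq_one_iff_adj.mpr hady] at this
          omega
        refine ⟨w, Or.inr ⟨hd2, ?_⟩⟩
        rw [SimpleGraph.dist_eq_one_iff_adj.mpr hadj,
          SimpleGraph.dist_eq_one_iff_adj.mpr hady]
        omega
    · refine ⟨x, Or.inl ⟨?_, by simp [SimpleGraph.dist_self]⟩⟩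
      have h0 : G.dist y x ≠ 0 := (hG.pos_dist_of_ne (Ne.symm hxy)).ne'
      have h1 : G.dist y x ≠ 1 := fun h =>
        hadj (SimpleGraph.dist_eq_one_iff_adj.mp h).symm
      omega
end

section
/- For any tree T of order n2 ≥ 3 and any n1 ≥ 2, dim(K_{n1} ⊠ T) = n2·(n1 − 1). -/
open SimpleGraph

section Aux


lemma tree_path_len {β : Type*} {T : SimpleGraph β} (hT : T.IsTree) {x y : β}
    (p : T.Walk x y) (hp : p.IsPath) : p.length = T.dist x y := by
  obtain ⟨q, hq, hql⟩ := hT.isConnected.exists_path_of_dist x y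
  rw [← hql]
  exact congrArg Walk.length ((hT.existsUnique_path x y).unique hp hq)

lemma tree_adj_dist {β : Type*} [DecidableEq β] {T : SimpleGraph β} (hT : T.IsTree) {b d : β}
    (hbd : T.Adj b d) (f : β) : T.dist b f ≠ T.dist d f := by
  obtain ⟨p, hp, hpl⟩ := hT.isConnected.exists_path_of_dist b f
  by_cases hd : d ∈ p.support
  · have h1 : (p.takeUntil d hd).length + (p.dropUntil d hd).length = p.length := by
      have := congrArg Walk.length (p.take_spec hd)
      rwa [Walk.length_append] at this
    have htake : (p.takeUntil d hd) = Walk.cons hbd Walk.nil :=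
      (hT.existsUnique_path b d).unique (hp.takeUntil hd)
        (by simp [Walk.cons_isPath_iff, hbd.ne])
    have hdrop := tree_path_len hT _ (hp.dropUntil hd)
    rw [htake] at h1
    simp only [Walk.length_cons, Walk.length_nil] at h1
    omega
  · have hq : (Walk.cons hbd.symm p).IsPath := hp.cons hd
    have := tree_path_len hT _ hq
    simp only [Walk.length_cons] at this
    omega

variable {β : Type*} {T : SimpleGraph β} {n1 : ℕ}

lemma sp_edge' {a c : Fin n1} {b d : β} (h : T.Adj b d) :
    (strongProd (⊤ : SimpleGraph (Fin n1)) T).Adj (a, b) (c, d) := by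
  refine ⟨?_, ?_, Or.inr h⟩
  · simp [Prod.ext_iff, h.ne]
  · rcases eq_or_ne a c with h' | h'
    · exact Or.inl h'
    · exact Or.inr (by simpa using h')

lemma sp_proj {x y : Fin n1 × β} (p : (strongProd (⊤ : SimpleGraph (Fin n1)) T).Walk x y) :
    ∃ q : T.Walk x.2 y.2, q.length ≤ p.length := by
  induction p with
  | nil => exact ⟨Walk.nil, le_refl _⟩
  | cons h p ih =>
    obtain ⟨q, hq⟩ := ih
    rcases h.2.2 with heq | hadj
    · exact ⟨q.copy heq.symm rfl, by simpa using Nat.le_succ_of_le hq⟩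
    · exact ⟨Walk.cons hadj q, by simpa using hq⟩

lemma sp_lift {b d : β} (c : Fin n1) (p : T.Walk b d) :
    ∃ q : (strongProd (⊤ : SimpleGraph (Fin n1)) T).Walk (c, b) (c, d),
      q.length = p.length := by
  induction p with
  | nil => exact ⟨Walk.nil, rfl⟩
  | cons h p ih =>
    obtain ⟨q, hq⟩ := ih
    exact ⟨Walk.cons (sp_edge' h) q, by simpa using hq⟩

lemma sp_dist_ne (hc : T.Connected) {b d : β} (hbd : b ≠ d) (a c : Fin n1) :
    (strongProd (⊤ : SimpleGraph (Fin n1)) T).dist (a, b) (c, d) = T.dist b d := by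
  obtain ⟨p, hpl⟩ := hc.exists_walk_length_eq_dist b d
  obtain ⟨w, hw⟩ : ∃ w : (strongProd (⊤ : SimpleGraph (Fin n1)) T).Walk (a, b) (c, d),
      w.length = p.length := by
    cases p with
    | nil => exact absurd rfl hbd
    | cons h q =>
      obtain ⟨q', hq'⟩ := sp_lift c q
      exact ⟨Walk.cons (sp_edge' h) q', by simpa using hq'⟩
  refine le_antisymm (hpl ▸ hw ▸ dist_le w) ?_
  obtain ⟨m, hm⟩ := (Reachable.exists_walk_length_eq_dist ⟨w⟩ : _)
  obtain ⟨q, hq⟩ := sp_proj m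
  calc T.dist b d ≤ q.length := dist_le q
    _ ≤ m.length := hq
    _ = _ := hm

lemma sp_dist_eq {a c : Fin n1} (hac : a ≠ c) (b : β) :
    (strongProd (⊤ : SimpleGraph (Fin n1)) T).dist (a, b) (c, b) = 1 := by
  rw [dist_eq_one_iff_adj]
  exact ⟨by simp [Prod.ext_iff, hac], Or.inr (by simpa using hac), Or.inl rfl⟩

lemma exists_third {β : Type*} [Fintype β] [DecidableEq β] (h : 3 ≤ Fintype.card β) (b d : β) :
    ∃ f, f ≠ b ∧ f ≠ d := by
  by_contra hcon
  push_neg at hcon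
  have hsub : (Finset.univ : Finset β) ⊆ {b, d} := by
    intro x _
    rcases eq_or_ne x b with rfl | hxb
    · simp
    · simp [hcon x hxb]
  have h2 : ({b, d} : Finset β).card ≤ 2 :=
    (Finset.card_insert_le _ _).trans (by simp)
  have := Finset.card_le_card hsub
  rw [Finset.card_univ] at this
  omega

end Aux

theorem stmt_15 {β : Type*} [Fintype β] (T : SimpleGraph β) (n1 : ℕ)
    (hT : T.IsTree) (hcard : 3 ≤ Fintype.card β) (hn1 : 2 ≤ n1) :
    metricDim (strongProd (⊤ : SimpleGraph (Fin n1)) T) =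
      Fintype.card β * (n1 - 1) := by
  classical
  have hconn := hT.isConnected
  set z : Fin n1 := ⟨0, by omega⟩ with hz
  set o : Fin n1 := ⟨1, by omega⟩ with ho
  have hzo : o ≠ z := by simp [hz, ho, Fin.ext_iff]
  set Sf : Finset (Fin n1 × β) := ({z}ᶜ : Finset (Fin n1)) ×ˢ Finset.univ with hSf
  have hmemS : ∀ p : Fin n1 × β, p ∈ (↑Sf : Set (Fin n1 × β)) ↔ p.1 ≠ z := by
    intro p; simp [hSf]
  have hScard : (↑Sf : Set (Fin n1 × β)).ncard = Fintype.card β * (n1 - 1) := by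
    rw [Set.ncard_coe_finset, hSf, Finset.card_product, Finset.card_compl]
    simp [Fintype.card_fin, Nat.mul_comm]
  have hgen : IsMetricGen (strongProd (⊤ : SimpleGraph (Fin n1)) T) ↑Sf := by
    rintro ⟨a, b⟩ ⟨c, d⟩ hxy
    by_cases hbd : b = d
    · subst hbd
      have hac : a ≠ c := by
        intro h; exact hxy (by simp [h])
      by_cases ha : a = z
      · refine ⟨(c, b), (hmemS _).2 (by subst ha; exact fun h => hac h.symm), ?_⟩
        rw [sp_dist_eq hac, SimpleGraph.dist_self]
        omega
      · refine ⟨(a, b), (hmemS _).2 ha, ?_⟩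
        rw [SimpleGraph.dist_self, sp_dist_eq (Ne.symm hac)]
        omega
    · by_cases hadj : T.Adj b d
      · obtain ⟨f, hfb, hfd⟩ := exists_third hcard b d
        refine ⟨(o, f), (hmemS _).2 hzo, ?_⟩
        rw [sp_dist_ne hconn (Ne.symm hfb) a o, sp_dist_ne hconn (Ne.symm hfd) c o]
        exact tree_adj_dist hT hadj f
      · have h1 : 0 < T.dist b d := hconn.pos_dist_of_ne hbd
        have h2 : T.dist b d ≠ 1 := fun h => hadj (dist_eq_one_iff_adj.1 h)
        refine ⟨(o, d), (hmemS _).2 hzo, ?_⟩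
        rw [sp_dist_ne hconn hbd a o]
        have hy : (strongProd (⊤ : SimpleGraph (Fin n1)) T).dist (c, d) (o, d) ≤ 1 := by
          rcases eq_or_ne c o with rfl | h
          · simp [SimpleGraph.dist_self]
          · rw [sp_dist_eq h]
        omega
  refine le_antisymm (Nat.sInf_le ⟨↑Sf, hgen, hScard⟩) (le_csInf ⟨_, ↑Sf, hgen, hScard⟩ ?_)
  rintro n ⟨S, hS, rfl⟩
  have hinj : Set.InjOn Prod.snd Sᶜ := by
    rintro ⟨a, b⟩ hx ⟨a', b'⟩ hy (h : b = b')
    subst h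
    by_contra hne
    have hne' : (a, b) ≠ (a', b) := fun h => hne (by simp [h])
    obtain ⟨⟨e, f⟩, hsS, hd⟩ := hS (a, b) (a', b) hne'
    apply hd
    by_cases hf : f = b
    · subst hf
      have hea : a ≠ e := by rintro rfl; exact hx hsS
      have hea' : a' ≠ e := by rintro rfl; exact hy hsS
      rw [sp_dist_eq hea, sp_dist_eq hea']
    · rw [sp_dist_ne hconn (Ne.symm hf) a e, sp_dist_ne hconn (Ne.symm hf) a' e]
  have hcompl : Sᶜ.ncard ≤ Fintype.card β := by
    have := Set.ncard_le_ncard_of_injOn Prod.snd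
      (fun x _ => Set.mem_univ x) hinj Set.finite_univ
    simpa [Set.ncard_univ, Nat.card_eq_fintype_card] using this
  have hsum : S.ncard + Sᶜ.ncard = n1 * Fintype.card β := by
    rw [Set.ncard_add_ncard_compl]
    simp [Nat.card_eq_fintype_card, Fintype.card_prod]
  obtain ⟨m, rfl⟩ : ∃ m, n1 = m + 2 := ⟨n1 - 2, by omega⟩
  have hring : (m + 2) * Fintype.card β
      = Fintype.card β * (m + 2 - 1) + Fintype.card β := by
    have : m + 2 - 1 = m + 1 := rfl
    rw [this]; ring
  rw [hring] at hsum
  set K := Fintype.card β * (m + 2 - 1) with hK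
  omega
end

section
/- For any n1 ≥ 2 and n2 ≥ 4, dim(K_{n1} ⊠ C_{n2}) = n2·(n1 − 1). -/
open SimpleGraph

namespace SPHelp

variable {n1 n2 : ℕ}

abbrev GP (n1 n2 : ℕ) := strongProd (⊤ : SimpleGraph (Fin n1)) (SimpleGraph.cycleGraph n2)

lemma adj_iff {x y : Fin n1 × Fin n2} :
    (GP n1 n2).Adj x y ↔ x ≠ y ∧ (x.2 = y.2 ∨ (cycleGraph n2).Adj x.2 y.2) := by
  constructor
  · rintro ⟨h1, -, h3⟩; exact ⟨h1, h3⟩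
  · rintro ⟨h1, h3⟩
    refine ⟨h1, ?_, h3⟩
    rcases eq_or_ne x.1 y.1 with h | h
    · exact Or.inl h
    · exact Or.inr ((SimpleGraph.top_adj _ _).mpr h)

def colHom (c : Fin n1) : cycleGraph n2 →g GP n1 n2 where
  toFun v := (c, v)
  map_rel' := fun h => adj_iff.mpr ⟨fun he => h.ne (congrArg Prod.snd he), Or.inr h⟩

lemma reach (x y : Fin n1 × Fin n2) : (GP n1 n2).Reachable x y := by
  obtain ⟨a, b⟩ := x
  obtain ⟨c, d⟩ := y
  have h1 : (GP n1 n2).Reachable (a, b) (a, d) :=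
    (cycleGraph_preconnected b d).map (colHom a)
  refine h1.trans ?_
  rcases eq_or_ne a c with h | h
  · subst h; exact Reachable.refl _
  · have hadj : (GP n1 n2).Adj (a, d) (c, d) :=
      adj_iff.mpr ⟨fun he => h (Prod.ext_iff.mp he).1, Or.inl rfl⟩
    exact hadj.reachable

lemma cdist_le_walk : ∀ {x y : Fin n1 × Fin n2} (w : (GP n1 n2).Walk x y),
    (cycleGraph n2).dist x.2 y.2 ≤ w.length := by
  intro x y w
  induction w with
  | nil => simp
  | @cons u v w h p ih =>
    haveI : Nonempty (Fin n2) := ⟨u.2⟩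
    have hconn : (cycleGraph n2).Connected := Connected.mk cycleGraph_preconnected
    have htri := hconn.dist_triangle (u := u.2) (v := v.2) (w := w.2)
    have h1 : (cycleGraph n2).dist u.2 v.2 ≤ 1 := by
      rcases (adj_iff.mp h).2 with h2 | h2
      · rw [h2, SimpleGraph.dist_self]; omega
      · rw [SimpleGraph.dist_eq_one_iff_adj.mpr h2]
    simp only [Walk.length_cons]
    omega

lemma dist_le_max (x y : Fin n1 × Fin n2) :
    (GP n1 n2).dist x y ≤ max (if x = y then 0 else 1) ((cycleGraph n2).dist x.2 y.2) := by
  obtain ⟨a, b⟩ := x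
  obtain ⟨c, d⟩ := y
  rcases eq_or_ne (a, b) ((c, d) : Fin n1 × Fin n2) with heq | hne
  · simp [heq, SimpleGraph.dist_self]
  · rcases eq_or_ne b d with hbd | hbd
    · subst hbd
      have : (GP n1 n2).Adj (a, b) (c, b) := adj_iff.mpr ⟨hne, Or.inl rfl⟩
      rw [SimpleGraph.dist_eq_one_iff_adj.mpr this]
      simp [hne]
    · haveI : Nonempty (Fin n2) := ⟨b⟩
      have hconn : (cycleGraph n2).Connected := Connected.mk cycleGraph_preconnected
      obtain ⟨w, hw⟩ := hconn.exists_walk_length_eq_dist b d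
      cases w with
      | nil => exact absurd rfl hbd
      | @cons _ v _ h p =>
        have hadj : (GP n1 n2).Adj (a, b) (c, v) :=
          adj_iff.mpr ⟨fun he => h.ne (congrArg Prod.snd he), Or.inr h⟩
        calc (GP n1 n2).dist (a, b) (c, d)
            ≤ (Walk.cons hadj (p.map (colHom c))).length := SimpleGraph.dist_le _
          _ = (cycleGraph n2).dist b d := by
              change (p.map (colHom c)).length + 1 = _
              rw [Walk.length_map]
              simpa using hw
          _ ≤ _ := le_max_right _ _

lemma dist_eq (x y : Fin n1 × Fin n2) :
    (GP n1 n2).dist x y = max (if x = y then 0 else 1) ((cycleGraph n2).dist x.2 y.2) := by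
  refine le_antisymm (dist_le_max x y) (max_le ?_ ?_)
  · split
    · omega
    · exact (reach x y).pos_dist_of_ne ‹x ≠ y›
  · obtain ⟨w, hw⟩ := (reach x y).exists_walk_length_eq_dist
    exact hw ▸ cdist_le_walk w

end SPHelp

namespace SPHelp

lemma two_le_cdist {n2 : ℕ} {b d : Fin n2} (hne : b ≠ d)
    (hadj : ¬ (cycleGraph n2).Adj b d) : 2 ≤ (cycleGraph n2).dist b d := by
  have hconn : (cycleGraph n2).Connected := by
    haveI : Nonempty (Fin n2) := ⟨b⟩
    exact Connected.mk cycleGraph_preconnected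
  have h0 : 0 < (cycleGraph n2).dist b d := hconn.pos_dist_of_ne hne
  have h1 : (cycleGraph n2).dist b d ≠ 1 := fun h => hadj (dist_eq_one_iff_adj.mp h)
  omega

lemma exists_third {n2 : ℕ} (hn2 : 4 ≤ n2) {b d : Fin n2} (h : (d - b).val = 1) :
    ∃ f : Fin n2, (cycleGraph n2).Adj d f ∧ ¬ (cycleGraph n2).Adj b f ∧ b ≠ f := by
  obtain ⟨m, rfl⟩ : ∃ m, n2 = m + 2 := ⟨n2 - 2, by omega⟩
  have hm : 2 ≤ m := by omega
  have hv1 : (1 : Fin (m + 2)).val = 1 := rfl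
  have hdb : d - b = 1 := Fin.ext (by rw [h, hv1])
  have hfbv : (d + 1 - b).val = 2 := by
    have h2 : d + 1 - b = 1 + 1 := by rw [← hdb]; abel
    rw [h2]
    simp [Fin.val_add]
    omega
  refine ⟨d + 1, ?_, ?_, ?_⟩
  · exact cycleGraph_adj.mpr (Or.inr (by rw [add_sub_cancel_left]))
  · intro hadj
    rcases cycleGraph_adj.mp hadj with h2 | h2
    · have hz : ((b - (d + 1)) + (d + 1 - b)).val = 0 := by
        rw [sub_add_sub_cancel', sub_self]
        rfl
      rw [h2] at hz
      simp [Fin.val_add, hfbv] at hz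
      rw [Nat.mod_eq_of_lt (by omega)] at hz
      omega
    · rw [h2, hv1] at hfbv
      omega
  · intro he
    rw [he, sub_self] at hfbv
    simp [Fin.val_zero] at hfbv

lemma ncard_eq_sum {n1 n2 : ℕ} (S : Set (Fin n1 × Fin n2)) [DecidablePred (· ∈ S)] :
    S.ncard = ∑ b : Fin n2, (Finset.univ.filter (fun a => (a, b) ∈ S)).card := by
  classical
  rw [Set.ncard_eq_toFinset_card']
  have hts : S.toFinset = Finset.univ.filter (· ∈ S) := by ext p; simp
  rw [hts, Finset.card_eq_sum_card_fiberwise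
    (f := Prod.snd) (t := Finset.univ) (fun x _ => Finset.mem_univ _)]
  refine Finset.sum_congr rfl fun b _ => ?_
  refine Finset.card_bij' (fun p _ => p.1) (fun a _ => (a, b)) ?_ ?_ ?_ ?_
  · intro p hp
    simp only [Finset.mem_filter, Finset.mem_univ, true_and] at hp ⊢
    obtain ⟨h1, h2⟩ := hp
    subst h2
    simpa using h1
  · intro a ha
    simp only [Finset.mem_filter, Finset.mem_univ, true_and] at ha ⊢
    exact ⟨ha, trivial⟩
  · intro p hp
    simp only [Finset.mem_filter, Finset.mem_univ, true_and] at hp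
    exact Prod.ext rfl hp.2.symm
  · intro a ha
    rfl

end SPHelp


theorem stmt_16 (n1 n2 : ℕ) (hn1 : 2 ≤ n1) (hn2 : 4 ≤ n2) :
    metricDim (strongProd (⊤ : SimpleGraph (Fin n1)) (SimpleGraph.cycleGraph n2)) =
      n2 * (n1 - 1) := by
  classical
  haveI : NeZero n1 := ⟨by omega⟩
  have hdist : ∀ x y : Fin n1 × Fin n2,
      (strongProd (⊤ : SimpleGraph (Fin n1)) (SimpleGraph.cycleGraph n2)).dist x y =
        max (if x = y then 0 else 1) ((cycleGraph n2).dist x.2 y.2) :=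
    SPHelp.dist_eq
  have he1 : (⟨1, by omega⟩ : Fin n1) ≠ 0 := by simp [Fin.ext_iff]
  -- S0 is a metric generator
  have hgen : IsMetricGen (strongProd (⊤ : SimpleGraph (Fin n1)) (SimpleGraph.cycleGraph n2))
      {p : Fin n1 × Fin n2 | p.1 ≠ 0} := by
    rintro ⟨a, b⟩ ⟨c, d⟩ hxy
    by_cases hbd : b = d
    · subst hbd
      have hac : a ≠ c := fun h => hxy (by rw [h])
      rcases eq_or_ne a 0 with ha | ha
      · refine ⟨(c, b), fun h => hac (ha.trans h.symm), ?_⟩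
        have h1 : (strongProd (⊤ : SimpleGraph (Fin n1)) (cycleGraph n2)).dist (a, b) (c, b)
            = 1 := by
          rw [hdist]
          simp [Prod.ext_iff, hac, SimpleGraph.dist_self]
        have h2 : (strongProd (⊤ : SimpleGraph (Fin n1)) (cycleGraph n2)).dist (c, b) (c, b)
            = 0 := SimpleGraph.dist_self
        omega
      · refine ⟨(a, b), ha, ?_⟩
        have h1 : (strongProd (⊤ : SimpleGraph (Fin n1)) (cycleGraph n2)).dist (a, b) (a, b)
            = 0 := SimpleGraph.dist_self
        have h2 : (strongProd (⊤ : SimpleGraph (Fin n1)) (cycleGraph n2)).dist (c, b) (a, b)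
            = 1 := by
          rw [hdist]
          simp [Prod.ext_iff, hac.symm, SimpleGraph.dist_self]
        omega
    · by_cases hadj : (cycleGraph n2).Adj b d
      · rcases cycleGraph_adj'.mp hadj with h2 | h2
        · -- (b - d).val = 1 : use f adjacent to b, far from d
          obtain ⟨f, hdf, hnadj, hnef⟩ := SPHelp.exists_third hn2 h2
          refine ⟨(⟨1, by omega⟩, f), he1, ?_⟩
          have h1 : (strongProd (⊤ : SimpleGraph (Fin n1)) (cycleGraph n2)).dist (a, b)
              (⟨1, by omega⟩, f) = 1 := by
            rw [hdist]
            rw [show (cycleGraph n2).dist b f = 1 from SimpleGraph.dist_eq_one_iff_adj.mpr hdf]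
            split <;> simp
          have h2 : 2 ≤ (strongProd (⊤ : SimpleGraph (Fin n1)) (cycleGraph n2)).dist (c, d)
              (⟨1, by omega⟩, f) := by
            rw [hdist]
            exact le_trans (SPHelp.two_le_cdist hnef hnadj) (le_max_right _ _)
          omega
        · obtain ⟨f, hdf, hnadj, hnef⟩ := SPHelp.exists_third hn2 h2
          refine ⟨(⟨1, by omega⟩, f), he1, ?_⟩
          have h1 : (strongProd (⊤ : SimpleGraph (Fin n1)) (cycleGraph n2)).dist (c, d)
              (⟨1, by omega⟩, f) = 1 := by
            rw [hdist]
            rw [show (cycleGraph n2).dist d f = 1 from SimpleGraph.dist_eq_one_iff_adj.mpr hdf]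
            split <;> simp
          have h2 : 2 ≤ (strongProd (⊤ : SimpleGraph (Fin n1)) (cycleGraph n2)).dist (a, b)
              (⟨1, by omega⟩, f) := by
            rw [hdist]
            exact le_trans (SPHelp.two_le_cdist hnef hnadj) (le_max_right _ _)
          omega
      · have hd2 : 2 ≤ (cycleGraph n2).dist b d := SPHelp.two_le_cdist hbd hadj
        refine ⟨(⟨1, by omega⟩, b), he1, ?_⟩
        have h1 : (strongProd (⊤ : SimpleGraph (Fin n1)) (cycleGraph n2)).dist (a, b)
            (⟨1, by omega⟩, b) ≤ 1 := by
          rw [hdist]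
          rw [show (cycleGraph n2).dist b b = 0 from SimpleGraph.dist_self]
          split <;> simp
        have h2 : 2 ≤ (strongProd (⊤ : SimpleGraph (Fin n1)) (cycleGraph n2)).dist (c, d)
            (⟨1, by omega⟩, b) := by
          rw [hdist]
          refine le_trans ?_ (le_max_right _ _)
          rwa [SimpleGraph.dist_comm]
        omega
  -- cardinality of S0
  have hcard0 : ({p : Fin n1 × Fin n2 | p.1 ≠ 0} : Set (Fin n1 × Fin n2)).ncard
      = n2 * (n1 - 1) := by
    rw [SPHelp.ncard_eq_sum]
    have hfib : ∀ b : Fin n2,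
        (Finset.univ.filter (fun a : Fin n1 => (a, b) ∈ {p : Fin n1 × Fin n2 | p.1 ≠ 0})).card
          = n1 - 1 := by
      intro b
      have hset : (Finset.univ.filter
          (fun a : Fin n1 => (a, b) ∈ {p : Fin n1 × Fin n2 | p.1 ≠ 0}))
          = Finset.univ.erase 0 := by
        ext a
        simp [Set.mem_setOf_eq, Finset.mem_erase, and_comm]
      rw [hset, Finset.card_erase_of_mem (Finset.mem_univ _), Finset.card_univ, Fintype.card_fin]
    rw [Finset.sum_congr rfl (fun b _ => hfib b), Finset.sum_const, Finset.card_univ,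
      Fintype.card_fin, smul_eq_mul]
  -- lower bound
  have hlow : ∀ n : ℕ,
      (∃ S : Set (Fin n1 × Fin n2),
        IsMetricGen (strongProd (⊤ : SimpleGraph (Fin n1)) (SimpleGraph.cycleGraph n2)) S ∧
          S.ncard = n) → n2 * (n1 - 1) ≤ n := by
    rintro n ⟨S, hS, rfl⟩
    rw [SPHelp.ncard_eq_sum]
    have hcol : ∀ b : Fin n2, n1 - 1 ≤ (Finset.univ.filter (fun a => (a, b) ∈ S)).card := by
      intro b
      have hsub : (Finset.univ.filter (fun a : Fin n1 => ¬ (a, b) ∈ S)).card ≤ 1 := by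
        rw [Finset.card_le_one]
        intro a ha c hc
        by_contra hac
        simp only [Finset.mem_filter, Finset.mem_univ, true_and] at ha hc
        obtain ⟨s, hs, hd⟩ := hS (a, b) (c, b) (fun h => hac (Prod.ext_iff.mp h).1)
        apply hd
        obtain ⟨e, f⟩ := s
        have h1 : ((a, b) : Fin n1 × Fin n2) ≠ (e, f) := fun h => ha (by rw [h]; exact hs)
        have h2 : ((c, b) : Fin n1 × Fin n2) ≠ (e, f) := fun h => hc (by rw [h]; exact hs)
        rw [hdist, hdist, if_neg h1, if_neg h2]
      have hsplit := Finset.card_filter_add_card_filter_not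
        (s := (Finset.univ : Finset (Fin n1))) (p := fun a : Fin n1 => (a, b) ∈ S)
      have hu : (Finset.univ : Finset (Fin n1)).card = n1 := by
        rw [Finset.card_univ, Fintype.card_fin]
      omega
    calc n2 * (n1 - 1) = ∑ _b : Fin n2, (n1 - 1) := by
          rw [Finset.sum_const, Finset.card_univ, Fintype.card_fin, smul_eq_mul]
      _ ≤ _ := Finset.sum_le_sum fun b _ => hcol b
  have hmem : n2 * (n1 - 1) ∈ {n : ℕ | ∃ S : Set (Fin n1 × Fin n2),
      IsMetricGen (strongProd (⊤ : SimpleGraph (Fin n1)) (SimpleGraph.cycleGraph n2)) S ∧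
        S.ncard = n} := ⟨_, hgen, hcard0⟩
  exact le_antisymm (Nat.sInf_le hmem) (le_csInf ⟨_, hmem⟩ fun m hm => hlow m hm)
end

section
/- For integers 2 ≤ n1 < n2, ⌊(n1+n2−2)/(n1−1)⌋ ≤ dim(P_{n1} ⊠ P_{n2}) ≤ ⌈(n1+n2−2)/(n1−1)⌉. -/
open SimpleGraph

namespace SPAux

variable {n1 n2 : ℕ}

/-- Chebyshev distance on the grid. -/
def cheb (u v : Fin n1 × Fin n2) : ℕ :=
  max (Nat.dist u.1.val v.1.val) (Nat.dist u.2.val v.2.val)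

lemma comp_iff {n : ℕ} (i k : Fin n) :
    (i = k ∨ (SimpleGraph.pathGraph n).Adj i k) ↔ Nat.dist i.val k.val ≤ 1 := by
  rw [SimpleGraph.pathGraph_adj, Fin.ext_iff]
  simp [Nat.dist]
  omega

lemma adj_iff (u v : Fin n1 × Fin n2) :
    (strongProd (SimpleGraph.pathGraph n1) (SimpleGraph.pathGraph n2)).Adj u v ↔
      u ≠ v ∧ Nat.dist u.1.val v.1.val ≤ 1 ∧ Nat.dist u.2.val v.2.val ≤ 1 := by
  show (u ≠ v ∧ _ ∧ _) ↔ _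
  rw [comp_iff, comp_iff]

lemma cheb_le_walk (u v : Fin n1 × Fin n2)
    (p : (strongProd (SimpleGraph.pathGraph n1) (SimpleGraph.pathGraph n2)).Walk u v) :
    cheb u v ≤ p.length := by
  induction p with
  | nil => simp [cheb]
  | @cons a b c h q ih =>
    rw [adj_iff] at h
    obtain ⟨-, h1, h2⟩ := h
    have t1 := Nat.dist.triangle_inequality a.1.val b.1.val c.1.val
    have t2 := Nat.dist.triangle_inequality a.2.val b.2.val c.2.val
    simp only [SimpleGraph.Walk.length_cons]
    unfold cheb at *
    omega

def stepVal (i j : ℕ) : ℕ := if i < j then i + 1 else max j (i - 1)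

lemma stepVal_lt {n : ℕ} (i j : Fin n) : stepVal i.val j.val < n := by
  unfold stepVal
  have := i.isLt; have := j.isLt
  split <;> omega

lemma stepVal_dist (i j : ℕ) : Nat.dist (stepVal i j) j = Nat.dist i j - 1 := by
  unfold stepVal; simp [Nat.dist]; split <;> omega

lemma stepVal_near (i j : ℕ) : Nat.dist i (stepVal i j) ≤ 1 := by
  unfold stepVal; simp [Nat.dist]; split <;> omega

lemma stepVal_ne (i j : ℕ) (h : i ≠ j) : stepVal i j ≠ i := by
  unfold stepVal; split <;> omega

lemma exists_walk (k : ℕ) : ∀ u v : Fin n1 × Fin n2, cheb u v = k →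
    ∃ p : (strongProd (SimpleGraph.pathGraph n1) (SimpleGraph.pathGraph n2)).Walk u v,
      p.length = k := by
  induction k with
  | zero =>
    intro u v h
    have : u = v := by
      unfold cheb at h
      have h1 : u.1 = v.1 := Fin.ext (Nat.eq_of_dist_eq_zero (by omega))
      have h2 : u.2 = v.2 := Fin.ext (Nat.eq_of_dist_eq_zero (by omega))
      exact Prod.ext h1 h2
    subst this
    exact ⟨SimpleGraph.Walk.nil, rfl⟩
  | succ m ih =>
    intro u v h
    set u' : Fin n1 × Fin n2 :=
      (⟨stepVal u.1.val v.1.val, stepVal_lt u.1 v.1⟩,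
       ⟨stepVal u.2.val v.2.val, stepVal_lt u.2 v.2⟩) with hu'
    have hch : cheb u' v = m := by
      unfold cheb at h ⊢
      simp only [hu']
      rw [stepVal_dist, stepVal_dist]
      omega
    have hne : u ≠ u' := by
      unfold cheb at h
      have : Nat.dist u.1.val v.1.val ≠ 0 ∨ Nat.dist u.2.val v.2.val ≠ 0 := by omega
      rcases this with h' | h'
      · have hne1 : u.1.val ≠ v.1.val := fun hh => h' (by simp [hh, Nat.dist_self])
        have hsv := stepVal_ne u.1.val v.1.val hne1
        have hval : u'.1.val = stepVal u.1.val v.1.val := rfl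
        intro hh
        rw [← hh] at hval
        exact hsv hval.symm
      · have hne2 : u.2.val ≠ v.2.val := fun hh => h' (by simp [hh, Nat.dist_self])
        have hsv := stepVal_ne u.2.val v.2.val hne2
        have hval : u'.2.val = stepVal u.2.val v.2.val := rfl
        intro hh
        rw [← hh] at hval
        exact hsv hval.symm
    have hadj : (strongProd (SimpleGraph.pathGraph n1) (SimpleGraph.pathGraph n2)).Adj u u' := by
      rw [adj_iff]
      refine ⟨hne, ?_, ?_⟩
      · exact stepVal_near u.1.val v.1.val
      · exact stepVal_near u.2.val v.2.val
    obtain ⟨p, hp⟩ := ih u' v hch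
    exact ⟨SimpleGraph.Walk.cons hadj p, by simp [hp]⟩

lemma dist_eq (u v : Fin n1 × Fin n2) :
    (strongProd (SimpleGraph.pathGraph n1) (SimpleGraph.pathGraph n2)).dist u v = cheb u v := by
  obtain ⟨p, hp⟩ := exists_walk (cheb u v) u v rfl
  refine le_antisymm (hp ▸ SimpleGraph.dist_le p) ?_
  obtain ⟨q, hq⟩ := SimpleGraph.Reachable.exists_walk_length_eq_dist ⟨p⟩
  calc cheb u v ≤ q.length := cheb_le_walk u v q
    _ = _ := hq



lemma nd (m n : ℕ) : Nat.dist m n = m - n + (n - m) := rfl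

set_option maxHeartbeats 1000000

section core

variable (a b q : ℕ) (t s : ℕ → ℕ)

lemma key (ha : 1 ≤ a) (hb : a < b) (hq : 2 ≤ q)
    (ht0 : t 0 = 0) (ht1 : t 1 = a) (htq : t q = b)
    (hs0 : s 0 = 0) (hs1 : s 1 = a)
    (halt : ∀ l, (s l = 0 ∧ s (l + 1) = a) ∨ (s l = a ∧ s (l + 1) = 0))
    (hmono : ∀ l m, l ≤ m → t l ≤ t m)
    (hstrict : ∀ l, l < q → t l < t (l + 1))
    (hgap : ∀ l, t (l + 1) ≤ t l + a)
    (hgapeq : ∀ l, l + 2 ≤ q → t (l + 1) = t l + a)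
    (x x' y y' : ℕ) (hx : x ≤ a) (hx' : x' ≤ a) (hy : y ≤ b) (hy' : y' ≤ b)
    (hyy' : y < y')
    (H : ∀ l ≤ q, max (Nat.dist x (s l)) (Nat.dist y (t l))
        = max (Nat.dist x' (s l)) (Nat.dist y' (t l))) : False := by
  have hyb : y < b := by omega
  by_cases hxx : x = x'
  · -- same column
    subst hxx
    have H0 := H 0 (by omega)
    rw [hs0, ht0] at H0
    simp only [nd] at H0
    have c0 : y' ≤ x := by omega
    clear H0
    have Hq := H q (le_refl q)
    rw [htq] at Hq
    have hsq : s q = 0 ∨ s q = a := by rcases halt q with ⟨h, -⟩ | ⟨h, -⟩ <;> omega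
    rcases hsq with h | h <;> rw [h] at Hq <;> simp only [nd] at Hq
    · have cq : b - y ≤ x := by omega
      clear Hq
      have H1 := H 1 (by omega)
      rw [hs1, ht1] at H1
      simp only [nd] at H1
      omega
    · omega
  · -- different columns
    obtain ⟨i, hti, hiq, higr⟩ : ∃ i, t i ≤ y ∧ i ≤ q ∧ ∀ l, i < l → l ≤ q → y < t l := by
      refine ⟨Nat.findGreatest (fun l => t l ≤ y) q, ?_, Nat.findGreatest_le q, ?_⟩
      · exact Nat.findGreatest_spec (P := fun l => t l ≤ y) (Nat.zero_le q) (by simp [ht0])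
      · intro l hl hlq
        have := Nat.findGreatest_is_greatest (P := fun l => t l ≤ y) hl hlq
        omega
    obtain ⟨j, htj, hjq, hjmin⟩ : ∃ j, y' ≤ t j ∧ j ≤ q ∧ ∀ l, l < j → t l < y' := by
      have hex : ∃ l, y' ≤ t l := ⟨q, by omega⟩
      refine ⟨Nat.find hex, Nat.find_spec hex, Nat.find_le (by omega : y' ≤ t q), ?_⟩
      intro l hl
      have := Nat.find_min hex hl
      omega
    have hilt : i < q := by
      by_contra hcon
      have h1 : t q ≤ t i := hmono q i (by omega)
      omega
    have hti1 : y < t (i + 1) := higr (i + 1) (Nat.lt_succ_self i) (by omega)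
    have hij : i < j := by
      by_contra hcon
      have h1 : t j ≤ t i := hmono j i (by omega)
      omega
    rcases Nat.lt_or_ge j (i + 2) with hcase | hcase
    · -- j = i + 1
      have hji : j = i + 1 := by omega
      have hy'ti1 : y' ≤ t (i + 1) := by rw [hji] at htj; exact htj
      rcases i with _ | m
      · -- i = 0
        have hs2 : s 2 = 0 := by
          have h12 := halt 1
          rw [(show (1:ℕ) + 1 = 2 from rfl)] at h12
          rcases h12 with ⟨h1, h2⟩ | ⟨h1, h2⟩ <;> omega
        have ht2 : t 1 < t 2 := by
          have := hstrict 1 (by omega)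
          rwa [(show (1:ℕ) + 1 = 2 from rfl)] at this
        rw [(show (0:ℕ) + 1 = 1 from rfl)] at hti1 hy'ti1
        have H2 := H 2 (by omega)
        rw [hs2] at H2
        simp only [nd] at H2
        have c2 : x ≤ x' := by omega
        clear H2
        have H0 := H 0 (by omega)
        rw [hs0, ht0] at H0
        simp only [nd] at H0
        omega
      · -- i = m + 1
        rw [(show m + 1 + 1 = m + 2 from rfl)] at hti1 hy'ti1
        have hmm : t m ≤ t (m + 1) := hmono m (m + 1) (by omega)
        have haltm1 := halt (m + 1)
        rw [(show m + 1 + 1 = m + 2 from rfl)] at haltm1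
        rcases halt m with ⟨e1, e2⟩ | ⟨e1, e2⟩ <;> rcases haltm1 with ⟨e3, e4⟩ | ⟨e3, e4⟩
        · -- s m = 0, s (m+1) = a = 0 : conflict
          omega
        · -- s m = 0, s (m+2) = 0
          have Hm2 := H (m + 2) (by omega)
          rw [e4] at Hm2
          simp only [nd] at Hm2
          have c2 : x ≤ x' := by omega
          clear Hm2
          have Hm := H m (by omega)
          rw [e1] at Hm
          simp only [nd] at Hm
          omega
        · -- s m = a, s (m+2) = a
          have Hm2 := H (m + 2) (by omega)
          rw [e4] at Hm2
          simp only [nd] at Hm2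
          have c2 : x' ≤ x := by omega
          clear Hm2
          have Hm := H m (by omega)
          rw [e1] at Hm
          simp only [nd] at Hm
          omega
        · -- conflict
          omega
    · -- j ≥ i + 2
      have htj1 : t (i + 1) < y' := hjmin (i + 1) (by omega)
      have hgeq : t (i + 1) = t i + a := hgapeq i (by omega)
      have Hi := H i (by omega)
      have hsi : s i = 0 ∨ s i = a := by rcases halt i with ⟨h, -⟩ | ⟨h, -⟩ <;> omega
      rcases hsi with h | h <;> rw [h] at Hi <;> simp only [nd] at Hi <;> omega

lemma same_row (ha : 1 ≤ a) (hq : 2 ≤ q)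
    (ht0 : t 0 = 0) (htq : t q = b)
    (halt : ∀ l, (s l = 0 ∧ s (l + 1) = a) ∨ (s l = a ∧ s (l + 1) = 0))
    (hgap : ∀ l, t (l + 1) ≤ t l + a)
    (x x' y : ℕ) (hx : x ≤ a) (hx' : x' ≤ a) (hy : y ≤ b)
    (hxx' : x < x')
    (H : ∀ l ≤ q, max (Nat.dist x (s l)) (Nat.dist y (t l))
        = max (Nat.dist x' (s l)) (Nat.dist y (t l))) : False := by
  obtain ⟨i, hti, hiq, hti1⟩ : ∃ i, t i ≤ y ∧ i ≤ q - 1 ∧ y ≤ t (i + 1) := by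
    refine ⟨Nat.findGreatest (fun l => t l ≤ y) (q - 1), ?_, Nat.findGreatest_le (q - 1), ?_⟩
    · exact Nat.findGreatest_spec (P := fun l => t l ≤ y) (Nat.zero_le (q - 1)) (by simp [ht0])
    · rcases Nat.lt_or_ge (Nat.findGreatest (fun l => t l ≤ y) (q - 1)) (q - 1) with h | h
      · by_contra hcon
        have hP : t (Nat.findGreatest (fun l => t l ≤ y) (q - 1) + 1) ≤ y := by omega
        exact Nat.findGreatest_is_greatest (P := fun l => t l ≤ y) (n := q - 1)
          (Nat.lt_succ_self _) (by omega) hP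
      · have hgle := Nat.findGreatest_le (n := q - 1) (P := fun l => t l ≤ y)
        have : Nat.findGreatest (fun l => t l ≤ y) (q - 1) + 1 = q := by omega
        rw [this, htq]; exact hy
  have Hi := H i (by omega)
  have Hi1 := H (i + 1) (by omega)
  have hgapi := hgap i
  simp only [nd] at Hi Hi1
  rcases halt i with ⟨e1, e2⟩ | ⟨e1, e2⟩ <;> omega

lemma core (ha : 1 ≤ a) (hb : a < b) (hq : 2 ≤ q)
    (ht0 : t 0 = 0) (ht1 : t 1 = a) (htq : t q = b)
    (hs0 : s 0 = 0) (hs1 : s 1 = a)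
    (halt : ∀ l, (s l = 0 ∧ s (l + 1) = a) ∨ (s l = a ∧ s (l + 1) = 0))
    (hmono : ∀ l m, l ≤ m → t l ≤ t m)
    (hstrict : ∀ l, l < q → t l < t (l + 1))
    (hgap : ∀ l, t (l + 1) ≤ t l + a)
    (hgapeq : ∀ l, l + 2 ≤ q → t (l + 1) = t l + a)
    (x x' y y' : ℕ) (hx : x ≤ a) (hx' : x' ≤ a) (hy : y ≤ b) (hy' : y' ≤ b)
    (H : ∀ l ≤ q, max (Nat.dist x (s l)) (Nat.dist y (t l))
        = max (Nat.dist x' (s l)) (Nat.dist y' (t l))) : x = x' ∧ y = y' := by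
  rcases lt_trichotomy y y' with h | h | h
  · exact absurd (key a b q t s ha hb hq ht0 ht1 htq hs0 hs1 halt hmono hstrict hgap hgapeq
      x x' y y' hx hx' hy hy' h H) not_false
  · subst h
    refine ⟨?_, rfl⟩
    rcases lt_trichotomy x x' with hh | hh | hh
    · exact absurd (same_row a b q t s ha hq ht0 htq halt hgap
        x x' y hx hx' hy hh H) not_false
    · exact hh
    · exact absurd (same_row a b q t s ha hq ht0 htq halt hgap
        x' x y hx' hx hy hh (fun l hl => (H l hl).symm)) not_false
  · exact absurd (key a b q t s ha hb hq ht0 ht1 htq hs0 hs1 halt hmono hstrict hgap hgapeq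
      x' x y' y hx' hx hy' hy h (fun l hl => (H l hl).symm)) not_false

end core



section facts
variable (a b : ℕ)

lemma facts (ha : 1 ≤ a) (hb : a < b) :
    let q := (b + a - 1) / a
    let t : ℕ → ℕ := fun l => min (l * a) b
    let s : ℕ → ℕ := fun l => if l % 2 = 0 then 0 else a
    2 ≤ q ∧ t 0 = 0 ∧ t 1 = a ∧ t q = b ∧ s 0 = 0 ∧ s 1 = a ∧
    (∀ l, (s l = 0 ∧ s (l + 1) = a) ∨ (s l = a ∧ s (l + 1) = 0)) ∧
    (∀ l m, l ≤ m → t l ≤ t m) ∧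
    (∀ l, l < q → t l < t (l + 1)) ∧
    (∀ l, t (l + 1) ≤ t l + a) ∧
    (∀ l, l + 2 ≤ q → t (l + 1) = t l + a) ∧
    (∀ l, s l ≤ a) ∧ (∀ l, t l ≤ b) := by
  intro q t s
  have hA : q * a ≤ b + a - 1 := Nat.div_mul_le_self (b + a - 1) a
  have hB : b + a - 1 < (q + 1) * a := by
    rw [← Nat.div_lt_iff_lt_mul (by omega : 0 < a)]
    omega
  have hq1 : (q + 1) * a = q * a + a := by ring
  have hqa : b ≤ q * a := by omega
  have hq2 : 2 ≤ q := by
    rw [Nat.le_div_iff_mul_le (by omega : 0 < a)]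
    omega
  have halt : ∀ l, (s l = 0 ∧ s (l + 1) = a) ∨ (s l = a ∧ s (l + 1) = 0) := by
    intro l
    rcases Nat.mod_two_eq_zero_or_one l with h | h
    · left
      have h2 : (l + 1) % 2 = 1 := by omega
      simp [s, h, h2]
    · right
      have h2 : (l + 1) % 2 = 0 := by omega
      simp [s, h, h2]
  refine ⟨hq2, by simp [t], by simp [t]; omega, by simp [t]; omega, by simp [s], by simp [s],
    halt, ?_, ?_, ?_, ?_, fun l => ?_, fun l => min_le_right _ _⟩
  · intro l m hlm
    exact min_le_min (Nat.mul_le_mul_right a hlm) (le_refl b)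
  · intro l hl
    have h1 : (l + 1) * a ≤ q * a := Nat.mul_le_mul_right a (by omega)
    have h2 : (l + 1) * a = l * a + a := by ring
    simp only [t]
    omega
  · intro l
    have h2 : (l + 1) * a = l * a + a := by ring
    simp only [t]
    omega
  · intro l hl
    have h1 : (l + 2) * a ≤ q * a := Nat.mul_le_mul_right a hl
    have h2 : (l + 1) * a = l * a + a := by ring
    have h3 : (l + 2) * a = l * a + a + a := by ring
    simp only [t]
    omega
  · simp only [s]
    split <;> omega

end facts


lemma upper (n1 n2 : ℕ) (h1 : 2 ≤ n1) (h2 : n1 < n2) :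
    ∃ S : Set (Fin n1 × Fin n2),
      IsMetricGen (strongProd (SimpleGraph.pathGraph n1) (SimpleGraph.pathGraph n2)) S ∧
      S.ncard = (n2 - 1 + (n1 - 1) - 1) / (n1 - 1) + 1 := by
  obtain ⟨hq2, ht0, ht1, htq, hs0, hs1, halt, hmono, hstrict, hgap, hgapeq, hsle, htle⟩ :=
    facts (n1 - 1) (n2 - 1) (by omega) (by omega)
  set a := n1 - 1 with hadef
  set b := n2 - 1 with hbdef
  set q := (b + a - 1) / a with hqdef
  set t : ℕ → ℕ := fun l => min (l * a) b with htdef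
  set s : ℕ → ℕ := fun l => if l % 2 = 0 then 0 else a with hsdef
  have hwlt1 : ∀ l, s l < n1 := fun l => by have := hsle l; omega
  have hwlt2 : ∀ l, t l < n2 := fun l => by have := htle l; omega
  set w : Fin (q + 1) → Fin n1 × Fin n2 :=
    fun l => (⟨s l.val, hwlt1 l.val⟩, ⟨t l.val, hwlt2 l.val⟩) with hw
  refine ⟨↑(Finset.image w Finset.univ), ?_, ?_⟩
  · intro u v huv
    by_contra hno
    push_neg at hno
    apply huv
    have H : ∀ l ≤ q, max (Nat.dist u.1.val (s l)) (Nat.dist u.2.val (t l))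
        = max (Nat.dist v.1.val (s l)) (Nat.dist v.2.val (t l)) := by
      intro l hl
      have hmem : w ⟨l, by omega⟩ ∈ (↑(Finset.image w Finset.univ) : Set (Fin n1 × Fin n2)) := by
        simp
      have heq := hno _ hmem
      rw [dist_eq, dist_eq] at heq
      exact heq
    obtain ⟨hxx, hyy⟩ := core a b q t s (by omega) (by omega) hq2 ht0 ht1 htq hs0 hs1 halt
      hmono hstrict hgap hgapeq u.1.val v.1.val u.2.val v.2.val
      (by have := u.1.isLt; omega) (by have := v.1.isLt; omega)
      (by have := u.2.isLt; omega) (by have := v.2.isLt; omega) H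
    exact Prod.ext (Fin.ext hxx) (Fin.ext hyy)
  · have hstrict' : ∀ m, m ≤ q → ∀ l, l < m → t l < t m := by
      intro m
      induction m with
      | zero => intro _ l hl; omega
      | succ k ih =>
        intro hk l hl
        have hk2 : t k < t (k + 1) := hstrict k (by omega)
        rcases Nat.lt_or_ge l k with h | h
        · exact lt_trans (ih (by omega) l h) hk2
        · have : l = k := by omega
          subst this; exact hk2
    have hinj : Function.Injective w := by
      intro l m hlm
      have hval : t l.val = t m.val := congrArg (fun p : Fin n1 × Fin n2 => p.2.val) hlm
      by_contra hne
      have hne' : l.val ≠ m.val := fun hc => hne (Fin.ext hc)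
      rcases Nat.lt_or_ge l.val m.val with h | h
      · have := hstrict' m.val (by have := m.isLt; omega) l.val h; omega
      · have := hstrict' l.val (by have := l.isLt; omega) m.val (by omega); omega
    rw [Set.ncard_coe_finset, Finset.card_image_of_injective _ hinj, Finset.card_univ,
      Fintype.card_fin]

lemma interval_card (n2 tv c : ℕ) :
    ((Finset.univ : Finset (Fin n2)).filter (fun y => Nat.dist y.val tv ≤ c)).card
      ≤ 2 * c + 1 := by
  have hsub := Finset.card_le_card_of_injOn (f := fun y : Fin n2 => y.val)
    (s := (Finset.univ : Finset (Fin n2)).filter (fun y => Nat.dist y.val tv ≤ c))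
    (t := Finset.Icc (tv - c) (tv + c)) ?_ ?_
  · have := Nat.card_Icc (tv - c) (tv + c)
    omega
  · intro y hy
    replace hy := (Finset.mem_filter.mp (Finset.mem_coe.mp hy)).2
    simp only [nd] at hy
    simp only [Finset.mem_coe, Finset.mem_Icc]
    omega
  · exact fun y _ z _ h => Fin.ext h

lemma lower (n1 n2 : ℕ) (h1 : 2 ≤ n1) (h2 : n1 < n2) (S : Set (Fin n1 × Fin n2))
    (hgen : IsMetricGen (strongProd (SimpleGraph.pathGraph n1) (SimpleGraph.pathGraph n2)) S) :
    (n2 - 1 + (n1 - 1)) / (n1 - 1) ≤ S.ncard := by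
  classical
  set a := n1 - 1 with hadef
  set b := n2 - 1 with hbdef
  have ha : 1 ≤ a := by omega
  have hb : a < b := by omega
  have hS : S.Finite := Set.toFinite S
  set S' := hS.toFinset with hS'
  -- the two pairs per row
  have h0lt : 0 < n1 := by omega
  have h1lt : 1 < n1 := by omega
  have halt : a - 1 < n1 := by omega
  have halt2 : a < n1 := by omega
  set uvert : Bool × Fin n2 → Fin n1 × Fin n2 :=
    fun r => if r.1 then ((⟨0, h0lt⟩ : Fin n1), r.2) else ((⟨a - 1, halt⟩ : Fin n1), r.2)
      with hu
  set vvert : Bool × Fin n2 → Fin n1 × Fin n2 :=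
    fun r => if r.1 then ((⟨1, h1lt⟩ : Fin n1), r.2) else ((⟨a, halt2⟩ : Fin n1), r.2)
      with hv
  have hne : ∀ r, uvert r ≠ vvert r := by
    rintro ⟨σ, yy⟩ hc
    have := congrArg (fun p : Fin n1 × Fin n2 => p.1.val) hc
    cases σ <;> simp [hu, hv] at this <;> omega
  have hch : ∀ r : Bool × Fin n2, ∃ z, z ∈ S ∧
      (strongProd (SimpleGraph.pathGraph n1) (SimpleGraph.pathGraph n2)).dist (uvert r) z ≠
      (strongProd (SimpleGraph.pathGraph n1) (SimpleGraph.pathGraph n2)).dist (vvert r) z := by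
    intro r
    obtain ⟨z, hz1, hz2⟩ := hgen (uvert r) (vvert r) (hne r)
    exact ⟨z, hz1, hz2⟩
  choose f hf1 hf2 using hch
  have hfS' : ∀ r, f r ∈ S' := fun r => (Set.Finite.mem_toFinset hS).mpr (hf1 r)
  have hcount := Finset.card_eq_sum_card_fiberwise
    (s := (Finset.univ : Finset (Bool × Fin n2))) (t := S') (f := f)
    (fun r _ => hfS' r)
  have hfib : ∀ z ∈ S', ((Finset.univ : Finset (Bool × Fin n2)).filter
      (fun r => f r = z)).card ≤ 2 * a := by
    intro z _
    have hsv : z.1.val ≤ a := by have := z.1.isLt; omega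
    have hsub : (Finset.univ : Finset (Bool × Fin n2)).filter (fun r => f r = z) ⊆
        ((Finset.univ.filter (fun y : Fin n2 => Nat.dist y.val z.2.val ≤ z.1.val - 1)).image
          (fun y => ((true, y) : Bool × Fin n2))) ∪
        ((Finset.univ.filter (fun y : Fin n2 => Nat.dist y.val z.2.val ≤ a - z.1.val - 1)).image
          (fun y => ((false, y) : Bool × Fin n2))) := by
      rintro ⟨σ, yy⟩ hr
      simp only [Finset.mem_filter, Finset.mem_univ, true_and] at hr
      have hd := hf2 (σ, yy)
      rw [hr, dist_eq, dist_eq] at hd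
      rw [Finset.mem_union]
      cases σ
      · right
        rw [Finset.mem_image]
        refine ⟨yy, ?_, rfl⟩
        simp only [Finset.mem_filter, Finset.mem_univ, true_and]
        simp only [hu, hv, if_false, cheb, Bool.false_eq_true, if_neg] at hd
        simp only [nd] at hd ⊢
        omega
      · left
        rw [Finset.mem_image]
        refine ⟨yy, ?_, rfl⟩
        simp only [Finset.mem_filter, Finset.mem_univ, true_and]
        simp only [hu, hv, if_true, cheb] at hd
        simp only [nd] at hd ⊢
        omega
    have hc1 := interval_card n2 z.2.val (z.1.val - 1)
    have hc2 := interval_card n2 z.2.val (a - z.1.val - 1)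
    have := Finset.card_le_card hsub
    have hcu := Finset.card_union_le
      ((Finset.univ.filter (fun y : Fin n2 => Nat.dist y.val z.2.val ≤ z.1.val - 1)).image
        (fun y => ((true, y) : Bool × Fin n2)))
      ((Finset.univ.filter (fun y : Fin n2 => Nat.dist y.val z.2.val ≤ a - z.1.val - 1)).image
        (fun y => ((false, y) : Bool × Fin n2)))
    have hi1 := Finset.card_image_le (s := Finset.univ.filter
      (fun y : Fin n2 => Nat.dist y.val z.2.val ≤ z.1.val - 1))
      (f := fun y => ((true, y) : Bool × Fin n2))
    have hi2 := Finset.card_image_le (s := Finset.univ.filter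
      (fun y : Fin n2 => Nat.dist y.val z.2.val ≤ a - z.1.val - 1))
      (f := fun y => ((false, y) : Bool × Fin n2))
    omega
  have hsum : ∑ z ∈ S', ((Finset.univ : Finset (Bool × Fin n2)).filter
      (fun r => f r = z)).card ≤ S'.card * (2 * a) := by
    have := Finset.sum_le_card_nsmul S' _ (2 * a) hfib
    simpa [smul_eq_mul] using this
  have hcard : (Finset.univ : Finset (Bool × Fin n2)).card = 2 * n2 := by
    simp [Fintype.card_prod]
  have hkey : b + 1 ≤ S'.card * a := by
    have h2 : 2 * n2 ≤ S'.card * (2 * a) := by omega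
    have h3 : S'.card * (2 * a) = 2 * (S'.card * a) := by ring
    omega
  have hncard : S.ncard = S'.card := Set.ncard_eq_toFinset_card S hS
  rw [hncard]
  have hlt : b + a < (S'.card + 1) * a := by
    have : (S'.card + 1) * a = S'.card * a + a := by ring
    omega
  have := (Nat.div_lt_iff_lt_mul (by omega : 0 < a)).mpr hlt
  omega

end SPAux

theorem stmt_17 (n1 n2 : ℕ) (h1 : 2 ≤ n1) (h2 : n1 < n2) :
    (n1 + n2 - 2) / (n1 - 1) ≤
        metricDim (strongProd (SimpleGraph.pathGraph n1) (SimpleGraph.pathGraph n2)) ∧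
      metricDim (strongProd (SimpleGraph.pathGraph n1) (SimpleGraph.pathGraph n2)) ≤
        (n1 + n2 - 2 + (n1 - 2)) / (n1 - 1) := by
  obtain ⟨S0, hgen0, hcard0⟩ := SPAux.upper n1 n2 h1 h2
  unfold metricDim
  constructor
  · refine le_csInf ⟨_, S0, hgen0, hcard0⟩ ?_
    rintro n ⟨S, hgenS, rfl⟩
    have hlow := SPAux.lower n1 n2 h1 h2 S hgenS
    have heq : n1 + n2 - 2 = n2 - 1 + (n1 - 1) := by omega
    rw [heq]
    exact hlow
  · have hle := Nat.sInf_le (s := {n | ∃ S : Set (Fin n1 × Fin n2),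
      IsMetricGen (strongProd (SimpleGraph.pathGraph n1) (SimpleGraph.pathGraph n2)) S ∧
      S.ncard = n}) ⟨S0, hgen0, hcard0⟩
    have heq : (n1 + n2 - 2 + (n1 - 2)) / (n1 - 1) = (n2 - 1 + (n1 - 1) - 1) / (n1 - 1) + 1 := by
      have h3 : n1 + n2 - 2 + (n1 - 2) = (n2 - 1 + (n1 - 1) - 1) + (n1 - 1) := by omega
      rw [h3, Nat.add_div_right _ (by omega : 0 < n1 - 1)]
    rw [heq]
    exact hle
end

section
/- For any integer n ≥ 2, the metric dimension of the strong product of two paths of order n equals 3: dim(P_n ⊠ P_n) = 3. -/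
open SimpleGraph

/-- Coordinate distance on ℕ. -/
def cd (a b : ℕ) : ℕ := (a - b) + (b - a)

/-- Chebyshev distance. -/
def D2 {n : ℕ} (x y : Fin n × Fin n) : ℕ := max (cd x.1.val y.1.val) (cd x.2.val y.2.val)

abbrev KG (n : ℕ) := strongProd (SimpleGraph.pathGraph n) (SimpleGraph.pathGraph n)

lemma kg_adj {n : ℕ} {x y : Fin n × Fin n} :
    (KG n).Adj x y ↔ x ≠ y ∧ cd x.1.val y.1.val ≤ 1 ∧ cd x.2.val y.2.val ≤ 1 := by
  constructor
  · rintro ⟨hne, h1, h2⟩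
    refine ⟨hne, ?_, ?_⟩
    · rcases h1 with h | h
      · simp [cd, h]
      · rw [SimpleGraph.pathGraph_adj] at h; simp only [cd]; omega
    · rcases h2 with h | h
      · simp [cd, h]
      · rw [SimpleGraph.pathGraph_adj] at h; simp only [cd]; omega
  · rintro ⟨hne, h1, h2⟩
    refine ⟨hne, ?_, ?_⟩
    · rcases Nat.eq_zero_or_pos (cd x.1.val y.1.val) with h | h
      · exact Or.inl (Fin.ext (by simp only [cd] at h; omega))
      · exact Or.inr (SimpleGraph.pathGraph_adj.mpr (by simp only [cd] at h1 h; omega))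
    · rcases Nat.eq_zero_or_pos (cd x.2.val y.2.val) with h | h
      · exact Or.inl (Fin.ext (by simp only [cd] at h; omega))
      · exact Or.inr (SimpleGraph.pathGraph_adj.mpr (by simp only [cd] at h2 h; omega))

lemma D2_comm {n : ℕ} (x y : Fin n × Fin n) : D2 x y = D2 y x := by
  simp only [D2, cd]; omega

lemma D2_triangle {n : ℕ} (x y z : Fin n × Fin n) : D2 x z ≤ D2 x y + D2 y z := by
  have h1 : cd x.1.val z.1.val ≤ cd x.1.val y.1.val + cd y.1.val z.1.val := by simp only [cd]; omega
  have h2 : cd x.2.val z.2.val ≤ cd x.2.val y.2.val + cd y.2.val z.2.val := by simp only [cd]; omega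
  simp only [D2]
  exact max_le (h1.trans (add_le_add (le_max_left _ _) (le_max_left _ _)))
    (h2.trans (add_le_add (le_max_right _ _) (le_max_right _ _)))

lemma D2_eq_zero {n : ℕ} {x y : Fin n × Fin n} (h : D2 x y = 0) : x = y := by
  simp only [D2, cd] at h
  exact Prod.ext (Fin.ext (by omega)) (Fin.ext (by omega))

/-- step from x one unit toward y -/
def stp {n : ℕ} (x y : Fin n) : Fin n :=
  if h : x.val < y.val then ⟨x.val + 1, by omega⟩
  else if h2 : y.val < x.val then ⟨x.val - 1, by omega⟩ else x

lemma stp_val {n : ℕ} (x y : Fin n) :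
    (stp x y).val = if x.val < y.val then x.val + 1 else if y.val < x.val then x.val - 1 else x.val := by
  simp only [stp]
  split_ifs <;> rfl

lemma stp_cd1 {n : ℕ} (x y : Fin n) : cd (stp x y).val y.val = cd x.val y.val - 1 := by
  rw [stp_val]; simp only [cd]; split_ifs <;> omega

lemma stp_cd2 {n : ℕ} (x y : Fin n) : cd x.val (stp x y).val ≤ 1 := by
  rw [stp_val]; simp only [cd]; split_ifs <;> omega

lemma stp_ne {n : ℕ} {x y : Fin n} (h : x.val ≠ y.val) : (stp x y).val ≠ x.val := by
  rw [stp_val]; split_ifs <;> omega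

lemma exists_walk {n : ℕ} : ∀ (k : ℕ) (x y : Fin n × Fin n), D2 x y = k →
    ∃ w : (KG n).Walk x y, w.length = k := by
  intro k
  induction k with
  | zero => intro x y h; rcases D2_eq_zero h; exact ⟨SimpleGraph.Walk.nil, rfl⟩
  | succ k ih =>
    intro x y h
    set z : Fin n × Fin n := (stp x.1 y.1, stp x.2 y.2) with hz
    have hne : x ≠ z := by
      have h1 := stp_cd1 x.1 y.1
      have h2 := stp_cd1 x.2 y.2
      simp only [D2] at h
      intro he
      have e1 : x.1.val = (stp x.1 y.1).val := congrArg (fun p => p.1.val) he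
      have e2 : x.2.val = (stp x.2 y.2).val := congrArg (fun p => p.2.val) he
      rcases (by omega : cd x.1.val y.1.val ≥ 1 ∨ cd x.2.val y.2.val ≥ 1) with hc | hc
      · exact stp_ne (by simp only [cd] at hc; omega) e1.symm
      · exact stp_ne (by simp only [cd] at hc; omega) e2.symm
    have hadj : (KG n).Adj x z := kg_adj.mpr ⟨hne, stp_cd2 x.1 y.1, stp_cd2 x.2 y.2⟩
    have hz2 : D2 z y = k := by
      have h1 := stp_cd1 x.1 y.1
      have h2 := stp_cd1 x.2 y.2
      simp only [D2, hz] at h ⊢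
      omega
    obtain ⟨w, hw⟩ := ih z y hz2
    exact ⟨SimpleGraph.Walk.cons hadj w, by simp [hw]⟩

lemma D2_le_walk {n : ℕ} {x y : Fin n × Fin n} (w : (KG n).Walk x y) : D2 x y ≤ w.length := by
  induction w with
  | nil => simp [D2, cd]
  | @cons a b c h p ih =>
    have h' := kg_adj.mp h
    have ht := D2_triangle a b c
    have : D2 a b ≤ 1 := by simp only [D2]; omega
    simp only [SimpleGraph.Walk.length_cons]
    omega

lemma dist_eq {n : ℕ} (x y : Fin n × Fin n) : (KG n).dist x y = D2 x y := by
  obtain ⟨w, hw⟩ := exists_walk (D2 x y) x y rfl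
  have h1 := SimpleGraph.dist_le w
  obtain ⟨p, hp⟩ := SimpleGraph.Reachable.exists_walk_length_eq_dist (Nonempty.intro w)
  have h2 := D2_le_walk p
  omega

section Upper
variable {n : ℕ}

lemma gen3 (hn : 2 ≤ n) :
    IsMetricGen (KG n) {(⟨0, by omega⟩, ⟨0, by omega⟩), (⟨0, by omega⟩, ⟨n-1, by omega⟩),
      (⟨n-1, by omega⟩, ⟨0, by omega⟩)} := by
  intro x y hxy
  by_contra hcon
  push_neg at hcon
  have h1 := hcon (⟨0, by omega⟩, ⟨0, by omega⟩) (by simp)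
  have h2 := hcon (⟨0, by omega⟩, ⟨n-1, by omega⟩) (by simp)
  have h3 := hcon (⟨n-1, by omega⟩, ⟨0, by omega⟩) (by simp)
  simp only [dist_eq] at h1 h2 h3
  have hx1 := x.1.isLt; have hx2 := x.2.isLt; have hy1 := y.1.isLt; have hy2 := y.2.isLt
  simp only [D2, cd, Fin.val_mk, Nat.sub_zero, Nat.zero_sub, Nat.add_zero] at h1 h2 h3
  rw [Nat.sub_eq_zero_of_le (by omega : x.2.val ≤ n-1),
      Nat.sub_eq_zero_of_le (by omega : y.2.val ≤ n-1)] at h2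
  rw [Nat.sub_eq_zero_of_le (by omega : x.1.val ≤ n-1),
      Nat.sub_eq_zero_of_le (by omega : y.1.val ≤ n-1)] at h3
  exact hxy (Prod.ext (Fin.ext (by omega)) (Fin.ext (by omega)))

lemma upper (hn : 2 ≤ n) :
    ∃ S : Set (Fin n × Fin n), IsMetricGen (KG n) S ∧ S.ncard = 3 := by
  refine ⟨_, gen3 hn, ?_⟩
  rw [Set.ncard_eq_three]
  refine ⟨_, _, _, ?_, ?_, ?_, rfl⟩
  · simp only [ne_eq, Prod.ext_iff, Fin.ext_iff]; omega
  · simp only [ne_eq, Prod.ext_iff, Fin.ext_iff]; omega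
  · simp only [ne_eq, Prod.ext_iff, Fin.ext_iff]; omega

end Upper

section Lower
variable {n : ℕ}

lemma unresolved_pair {S : Set (Fin n × Fin n)} {u v x y : Fin n × Fin n}
    (hgen : IsMetricGen (KG n) S) (hsub : S ⊆ {u, v}) (hxy : x ≠ y)
    (hu : D2 x u = D2 y u) (hv : D2 x v = D2 y v) : False := by
  obtain ⟨s, hs, hne⟩ := hgen x y hxy
  simp only [dist_eq] at hne
  rcases Set.mem_insert_iff.mp (hsub hs) with rfl | hs2
  · exact hne hu
  · rw [Set.mem_singleton_iff] at hs2; subst hs2; exact hne hv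

lemma window {u v w : Fin n × Fin n} (h1 : D2 w u = 1) :
    D2 w v ≤ D2 u v + 1 ∧ D2 u v ≤ D2 w v + 1 := by
  have t1 := D2_triangle w u v
  have t2 := D2_triangle u w v
  rw [D2_comm u w] at t2
  omega

/-- a vertex adjacent to `t` -/
lemma exists_nbr (hn : 2 ≤ n) (t : Fin n) : ∃ b' : ℕ, b' < n ∧ (b' - t.val) + (t.val - b') = 1 := by
  have := t.isLt
  rcases Nat.eq_zero_or_pos t.val with h | h
  · exact ⟨1, by omega, by omega⟩
  · exact ⟨t.val - 1, by omega, by omega⟩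

lemma one_case (hn : 2 ≤ n) {S : Set (Fin n × Fin n)} {u : Fin n × Fin n}
    (hgen : IsMetricGen (KG n) S) (hsub : S ⊆ {u, u}) : False := by
  obtain ⟨a', ha'n, ha'⟩ := exists_nbr hn u.1
  obtain ⟨b', hb'n, hb'⟩ := exists_nbr hn u.2
  have hxy : ((⟨a', ha'n⟩, u.2) : Fin n × Fin n) ≠ (u.1, ⟨b', hb'n⟩) := by
    simp only [ne_eq, Prod.ext_iff, Fin.ext_iff, Fin.val_mk]
    omega
  have h1 : D2 ((⟨a', ha'n⟩, u.2) : Fin n × Fin n) u = 1 := by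
    simp only [D2, cd, Fin.val_mk]; omega
  have h2 : D2 ((u.1, ⟨b', hb'n⟩) : Fin n × Fin n) u = 1 := by
    simp only [D2, cd, Fin.val_mk]; omega
  exact unresolved_pair hgen hsub hxy (h1.trans h2.symm) (h1.trans h2.symm)

lemma nbr_case {S : Set (Fin n × Fin n)} {u v : Fin n × Fin n}
    (hgen : IsMetricGen (KG n) S) (hsub : S ⊆ {u, v})
    (hint : (1 ≤ u.1.val ∧ u.1.val + 2 ≤ n) ∨ (1 ≤ u.2.val ∧ u.2.val + 2 ≤ n)) : False := by
  have hn : 2 ≤ n := by rcases hint with ⟨h1, h2⟩ | ⟨h1, h2⟩ <;> omega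
  rcases hint with ⟨ha1, ha2⟩ | ⟨ha1, ha2⟩
  · obtain ⟨b', hb'n, hb'⟩ := exists_nbr hn u.2
    set w1 : Fin n × Fin n := (⟨u.1.val - 1, by omega⟩, u.2) with hw1
    set w2 : Fin n × Fin n := (⟨u.1.val + 1, by omega⟩, u.2) with hw2
    set w3 : Fin n × Fin n := (⟨u.1.val - 1, by omega⟩, ⟨b', hb'n⟩) with hw3
    set w4 : Fin n × Fin n := (⟨u.1.val + 1, by omega⟩, ⟨b', hb'n⟩) with hw4
    have e1 : D2 w1 u = 1 := by simp only [hw1, D2, cd, Fin.val_mk]; omega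
    have e2 : D2 w2 u = 1 := by simp only [hw2, D2, cd, Fin.val_mk]; omega
    have e3 : D2 w3 u = 1 := by simp only [hw3, D2, cd, Fin.val_mk]; omega
    have e4 : D2 w4 u = 1 := by simp only [hw4, D2, cd, Fin.val_mk]; omega
    have d12 : w1 ≠ w2 := by simp only [hw1, hw2, ne_eq, Prod.ext_iff, Fin.ext_iff, Fin.val_mk]; omega
    have d13 : w1 ≠ w3 := by simp only [hw1, hw3, ne_eq, Prod.ext_iff, Fin.ext_iff, Fin.val_mk]; omega
    have d14 : w1 ≠ w4 := by simp only [hw1, hw4, ne_eq, Prod.ext_iff, Fin.ext_iff, Fin.val_mk]; omega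
    have d23 : w2 ≠ w3 := by simp only [hw2, hw3, ne_eq, Prod.ext_iff, Fin.ext_iff, Fin.val_mk]; omega
    have d24 : w2 ≠ w4 := by simp only [hw2, hw4, ne_eq, Prod.ext_iff, Fin.ext_iff, Fin.val_mk]; omega
    have d34 : w3 ≠ w4 := by simp only [hw3, hw4, ne_eq, Prod.ext_iff, Fin.ext_iff, Fin.val_mk]; omega
    obtain ⟨f1a, f1b⟩ := window (v := v) e1
    obtain ⟨f2a, f2b⟩ := window (v := v) e2
    obtain ⟨f3a, f3b⟩ := window (v := v) e3
    obtain ⟨f4a, f4b⟩ := window (v := v) e4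
    have hcol : D2 w1 v = D2 w2 v ∨ D2 w1 v = D2 w3 v ∨ D2 w1 v = D2 w4 v ∨
        D2 w2 v = D2 w3 v ∨ D2 w2 v = D2 w4 v ∨ D2 w3 v = D2 w4 v := by omega
    rcases hcol with h | h | h | h | h | h
    · exact unresolved_pair hgen hsub d12 (e1.trans e2.symm) h
    · exact unresolved_pair hgen hsub d13 (e1.trans e3.symm) h
    · exact unresolved_pair hgen hsub d14 (e1.trans e4.symm) h
    · exact unresolved_pair hgen hsub d23 (e2.trans e3.symm) h
    · exact unresolved_pair hgen hsub d24 (e2.trans e4.symm) h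
    · exact unresolved_pair hgen hsub d34 (e3.trans e4.symm) h
  · obtain ⟨b', hb'n, hb'⟩ := exists_nbr hn u.1
    set w1 : Fin n × Fin n := (u.1, ⟨u.2.val - 1, by omega⟩) with hw1
    set w2 : Fin n × Fin n := (u.1, ⟨u.2.val + 1, by omega⟩) with hw2
    set w3 : Fin n × Fin n := (⟨b', hb'n⟩, ⟨u.2.val - 1, by omega⟩) with hw3
    set w4 : Fin n × Fin n := (⟨b', hb'n⟩, ⟨u.2.val + 1, by omega⟩) with hw4
    have e1 : D2 w1 u = 1 := by simp only [hw1, D2, cd, Fin.val_mk]; omega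
    have e2 : D2 w2 u = 1 := by simp only [hw2, D2, cd, Fin.val_mk]; omega
    have e3 : D2 w3 u = 1 := by simp only [hw3, D2, cd, Fin.val_mk]; omega
    have e4 : D2 w4 u = 1 := by simp only [hw4, D2, cd, Fin.val_mk]; omega
    have d12 : w1 ≠ w2 := by simp only [hw1, hw2, ne_eq, Prod.ext_iff, Fin.ext_iff, Fin.val_mk]; omega
    have d13 : w1 ≠ w3 := by simp only [hw1, hw3, ne_eq, Prod.ext_iff, Fin.ext_iff, Fin.val_mk]; omega
    have d14 : w1 ≠ w4 := by simp only [hw1, hw4, ne_eq, Prod.ext_iff, Fin.ext_iff, Fin.val_mk]; omega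
    have d23 : w2 ≠ w3 := by simp only [hw2, hw3, ne_eq, Prod.ext_iff, Fin.ext_iff, Fin.val_mk]; omega
    have d24 : w2 ≠ w4 := by simp only [hw2, hw4, ne_eq, Prod.ext_iff, Fin.ext_iff, Fin.val_mk]; omega
    have d34 : w3 ≠ w4 := by simp only [hw3, hw4, ne_eq, Prod.ext_iff, Fin.ext_iff, Fin.val_mk]; omega
    obtain ⟨f1a, f1b⟩ := window (v := v) e1
    obtain ⟨f2a, f2b⟩ := window (v := v) e2
    obtain ⟨f3a, f3b⟩ := window (v := v) e3
    obtain ⟨f4a, f4b⟩ := window (v := v) e4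
    have hcol : D2 w1 v = D2 w2 v ∨ D2 w1 v = D2 w3 v ∨ D2 w1 v = D2 w4 v ∨
        D2 w2 v = D2 w3 v ∨ D2 w2 v = D2 w4 v ∨ D2 w3 v = D2 w4 v := by omega
    rcases hcol with h | h | h | h | h | h
    · exact unresolved_pair hgen hsub d12 (e1.trans e2.symm) h
    · exact unresolved_pair hgen hsub d13 (e1.trans e3.symm) h
    · exact unresolved_pair hgen hsub d14 (e1.trans e4.symm) h
    · exact unresolved_pair hgen hsub d23 (e2.trans e3.symm) h
    · exact unresolved_pair hgen hsub d24 (e2.trans e4.symm) h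
    · exact unresolved_pair hgen hsub d34 (e3.trans e4.symm) h

lemma corner_case (hn3 : 3 ≤ n) {S : Set (Fin n × Fin n)} {u v : Fin n × Fin n}
    (hgen : IsMetricGen (KG n) S) (hsub : S ⊆ {u, v})
    (hu1 : u.1.val = 0 ∨ u.1.val = n-1) (hu2 : u.2.val = 0 ∨ u.2.val = n-1)
    (hv1 : v.1.val = 0 ∨ v.1.val = n-1) (hv2 : v.2.val = 0 ∨ v.2.val = n-1)
    (huv : u ≠ v) : False := by
  have hn : 2 ≤ n := by omega
  have huv' : u.1.val ≠ v.1.val ∨ u.2.val ≠ v.2.val := by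
    by_contra hc
    push_neg at hc
    exact huv (Prod.ext (Fin.ext hc.1) (Fin.ext hc.2))
  by_cases hc1 : u.1.val = v.1.val
  · -- same first coordinate
    obtain ⟨c', hc'n, hc'⟩ := exists_nbr hn u.1
    refine unresolved_pair (x := (u.1, ⟨1, by omega⟩)) (y := (⟨c', hc'n⟩, ⟨1, by omega⟩))
      hgen hsub ?_ ?_ ?_
    · simp only [ne_eq, Prod.ext_iff, Fin.ext_iff, Fin.val_mk]; omega
    · simp only [D2, cd, Fin.val_mk]; omega
    · simp only [D2, cd, Fin.val_mk]; omega
  by_cases hc2 : u.2.val = v.2.val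
  · obtain ⟨c', hc'n, hc'⟩ := exists_nbr hn u.2
    refine unresolved_pair (x := (⟨1, by omega⟩, u.2)) (y := (⟨1, by omega⟩, ⟨c', hc'n⟩))
      hgen hsub ?_ ?_ ?_
    · simp only [ne_eq, Prod.ext_iff, Fin.ext_iff, Fin.val_mk]; omega
    · simp only [D2, cd, Fin.val_mk]; omega
    · simp only [D2, cd, Fin.val_mk]; omega
  by_cases hd : u.1.val = u.2.val
  · -- main diagonal corners
    refine unresolved_pair (x := ((⟨0, by omega⟩ : Fin n), (⟨1, by omega⟩ : Fin n)))
      (y := ((⟨1, by omega⟩ : Fin n), (⟨0, by omega⟩ : Fin n))) hgen hsub ?_ ?_ ?_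
    · simp only [ne_eq, Prod.ext_iff, Fin.ext_iff, Fin.val_mk]; omega
    · simp only [D2, cd, Fin.val_mk]; omega
    · simp only [D2, cd, Fin.val_mk]; omega
  · -- anti-diagonal corners
    refine unresolved_pair (x := ((⟨0, by omega⟩ : Fin n), (⟨0, by omega⟩ : Fin n)))
      (y := ((⟨n-1, by omega⟩ : Fin n), (⟨n-1, by omega⟩ : Fin n))) hgen hsub ?_ ?_ ?_
    · simp only [ne_eq, Prod.ext_iff, Fin.ext_iff, Fin.val_mk]; omega
    · simp only [D2, cd, Fin.val_mk]; omega
    · simp only [D2, cd, Fin.val_mk]; omega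

lemma two_case (hn2 : n = 2) {S : Set (Fin n × Fin n)} {u v : Fin n × Fin n}
    (hgen : IsMetricGen (KG n) S) (hsub : S ⊆ {u, v}) (huv : u ≠ v) : False := by
  subst hn2
  have hu1 := u.1.isLt; have hu2 := u.2.isLt; have hv1 := v.1.isLt; have hv2 := v.2.isLt
  have huv' : u.1.val ≠ v.1.val ∨ u.2.val ≠ v.2.val := by
    by_contra hc
    push_neg at hc
    exact huv (Prod.ext (Fin.ext hc.1) (Fin.ext hc.2))
  by_cases hc1 : u.1.val = v.1.val
  · refine unresolved_pair (x := ((⟨1 - u.1.val, by omega⟩ : Fin 2), (⟨0, by omega⟩ : Fin 2)))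
      (y := ((⟨1 - u.1.val, by omega⟩ : Fin 2), (⟨1, by omega⟩ : Fin 2))) hgen hsub ?_ ?_ ?_
    · simp only [ne_eq, Prod.ext_iff, Fin.ext_iff, Fin.val_mk]; omega
    · simp only [D2, cd, Fin.val_mk]; omega
    · simp only [D2, cd, Fin.val_mk]; omega
  by_cases hc2 : u.2.val = v.2.val
  · refine unresolved_pair (x := ((⟨0, by omega⟩ : Fin 2), (⟨1 - u.2.val, by omega⟩ : Fin 2)))
      (y := ((⟨1, by omega⟩ : Fin 2), (⟨1 - u.2.val, by omega⟩ : Fin 2))) hgen hsub ?_ ?_ ?_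
    · simp only [ne_eq, Prod.ext_iff, Fin.ext_iff, Fin.val_mk]; omega
    · simp only [D2, cd, Fin.val_mk]; omega
    · simp only [D2, cd, Fin.val_mk]; omega
  · refine unresolved_pair (x := ((⟨u.1.val, by omega⟩ : Fin 2), (⟨1 - u.2.val, by omega⟩ : Fin 2)))
      (y := ((⟨1 - u.1.val, by omega⟩ : Fin 2), (⟨u.2.val, by omega⟩ : Fin 2))) hgen hsub ?_ ?_ ?_
    · simp only [ne_eq, Prod.ext_iff, Fin.ext_iff, Fin.val_mk]; omega
    · simp only [D2, cd, Fin.val_mk]; omega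
    · simp only [D2, cd, Fin.val_mk]; omega

lemma lower (hn : 2 ≤ n) (S : Set (Fin n × Fin n)) (hgen : IsMetricGen (KG n) S) :
    3 ≤ S.ncard := by
  by_contra hcon
  push_neg at hcon
  rcases (by omega : S.ncard = 0 ∨ S.ncard = 1 ∨ S.ncard = 2) with h | h | h
  · rw [Set.ncard_eq_zero (Set.toFinite S)] at h
    subst h
    exact one_case hn (u := (⟨0, by omega⟩, ⟨0, by omega⟩)) hgen (by simp)
  · obtain ⟨u, rfl⟩ := Set.ncard_eq_one.mp h
    exact one_case hn (u := u) hgen (by simp)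
  · obtain ⟨u, v, huv, rfl⟩ := Set.ncard_eq_two.mp h
    have hsub : ({u, v} : Set (Fin n × Fin n)) ⊆ {u, v} := subset_rfl
    have hsub' : ({u, v} : Set (Fin n × Fin n)) ⊆ {v, u} := by rw [Set.pair_comm]
    by_cases hn2 : n = 2
    · exact two_case hn2 hgen hsub huv
    have hn3 : 3 ≤ n := by omega
    by_cases hq1 : 1 ≤ u.1.val ∧ u.1.val + 2 ≤ n
    · exact nbr_case hgen hsub (Or.inl hq1)
    by_cases hq2 : 1 ≤ u.2.val ∧ u.2.val + 2 ≤ n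
    · exact nbr_case hgen hsub (Or.inr hq2)
    by_cases hq3 : 1 ≤ v.1.val ∧ v.1.val + 2 ≤ n
    · exact nbr_case hgen hsub' (Or.inl hq3)
    by_cases hq4 : 1 ≤ v.2.val ∧ v.2.val + 2 ≤ n
    · exact nbr_case hgen hsub' (Or.inr hq4)
    · have b1 := u.1.isLt; have b2 := u.2.isLt; have b3 := v.1.isLt; have b4 := v.2.isLt
      exact corner_case hn3 hgen hsub (by omega) (by omega) (by omega) (by omega) huv

end Lower


theorem stmt_18 (n : ℕ) (hn : 2 ≤ n) :
    metricDim (strongProd (SimpleGraph.pathGraph n) (SimpleGraph.pathGraph n)) = 3 := by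
  obtain ⟨S3, hS3, hc3⟩ := upper hn
  have h3 : 3 ∈ {k | ∃ S : Set (Fin n × Fin n), IsMetricGen (KG n) S ∧ S.ncard = k} :=
    ⟨S3, hS3, hc3⟩
  refine le_antisymm (Nat.sInf_le h3) (le_csInf ⟨3, h3⟩ ?_)
  rintro k ⟨S, hS, rfl⟩
  exact lower hn S hS
end

section
/- Let C be a cycle graph and x, y, u, v vertices of C with x adjacent to y. If d_C(u,x) = d_C(v,x) and u ≠ v, then d_C(u,y) ≠ d_C(v,y). -/
open SimpleGraph

private lemma mod2' {n m : ℕ} (hn : 0 < n) (h : m < 2*n) :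
    (m < n ∧ m % n = m) ∨ (n ≤ m ∧ m % n = m - n) := by
  rcases lt_or_ge m n with h1 | h1
  · exact Or.inl ⟨h1, Nat.mod_eq_of_lt h1⟩
  · refine Or.inr ⟨h1, ?_⟩
    rw [Nat.mod_eq_sub_mod h1, Nat.mod_eq_of_lt (by omega)]

private lemma cycle_walk {n : ℕ} (hn : 2 ≤ n) :
    ∀ (k : ℕ) (u v : Fin n), (v - u).val = k →
      ∃ w : (SimpleGraph.cycleGraph n).Walk u v, w.length = k := by
  haveI : NeZero n := ⟨by omega⟩
  intro k
  induction k with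
  | zero =>
    intro u v hk
    have : v - u = 0 := Fin.ext (by simpa using hk)
    have huv : v = u := by
      have := sub_eq_zero.mp this
      exact this
    subst huv
    exact ⟨Walk.nil, rfl⟩
  | succ k ih =>
    intro u v hk
    have h1 : (1 : Fin n).val = 1 := by
      rw [Fin.val_one']
      exact Nat.mod_eq_of_lt (by omega)
    have adj : (SimpleGraph.cycleGraph n).Adj u (u + 1) := by
      rw [cycleGraph_adj']
      right
      have : (u + 1) - u = 1 := by abel
      rw [this, h1]
    have hk2 : (v - (u + 1)).val = k := by
      have he : v - (u + 1) = (v - u) - 1 := by abel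
      rw [he, Fin.sub_def, h1]
      have hvu : (v - u).val < n := (v - u).isLt
      simp only [hk]
      have : n - 1 + (k + 1) = n + k := by omega
      rw [hk] at hvu
      rw [this, Nat.add_mod_left, Nat.mod_eq_of_lt (by omega)]
    obtain ⟨w, hw⟩ := ih (u + 1) v hk2
    exact ⟨Walk.cons adj w, by simp [hw]⟩

private lemma cycle_lb {n : ℕ} (hn : 2 ≤ n) {u v : Fin n}
    (w : (SimpleGraph.cycleGraph n).Walk u v) :
    min (v - u).val ((n - (v - u).val) % n) ≤ w.length := by
  haveI : NeZero n := ⟨by omega⟩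
  induction w with
  | nil => simp
  | @cons u u' v h p ih =>
    rw [cycleGraph_adj'] at h
    have key : v - u = (v - u') + (u' - u) := by abel
    have hs : (v - u).val = ((v - u').val + (u' - u).val) % n := by
      rw [key, Fin.val_add]
    set s := (v - u).val with hs'
    set t := (v - u').val with ht'
    have he : (u' - u).val = (n - u.val + u'.val) % n := by rw [Fin.sub_def]
    have hf : (u - u').val = (n - u'.val + u.val) % n := by rw [Fin.sub_def]
    have hsn : s < n := (v - u).isLt
    have htn : t < n := (v - u').isLt
    have hp : u.val < n := u.isLt
    have hq : u'.val < n := u'.isLt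
    have hen : (u' - u).val < n := (u' - u).isLt
    simp only [Walk.length_cons]
    have m1 := mod2' (by omega : 0 < n) (show t + (u' - u).val < 2*n by omega)
    have m2 := mod2' (by omega : 0 < n) (show n - u.val + u'.val < 2*n by omega)
    have m3 := mod2' (by omega : 0 < n) (show n - u'.val + u.val < 2*n by omega)
    have m4 := mod2' (by omega : 0 < n) (show n - s < 2*n by omega)
    have m5 := mod2' (by omega : 0 < n) (show n - t < 2*n by omega)
    omega

private lemma cycle_dist {n : ℕ} (hn : 2 ≤ n) (u v : Fin n) :
    (SimpleGraph.cycleGraph n).dist u v = min (v - u).val ((n - (v - u).val) % n) := by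
  haveI : NeZero n := ⟨by omega⟩
  apply le_antisymm
  · apply le_min
    · obtain ⟨w, hw⟩ := cycle_walk hn (v - u).val u v rfl
      calc _ ≤ w.length := SimpleGraph.dist_le w
        _ = _ := hw
    · obtain ⟨w, hw⟩ := cycle_walk hn (u - v).val v u rfl
      have hd : (u - v).val = (n - (v - u).val) % n := by
        have h1 : (u - v).val = (n - v.val + u.val) % n := by rw [Fin.sub_def]
        have h2 : (v - u).val = (n - u.val + v.val) % n := by rw [Fin.sub_def]
        have hp : u.val < n := u.isLt
        have hq : v.val < n := v.isLt
        have hs : (v - u).val < n := (v - u).isLt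
        have m1 := mod2' (by omega : 0 < n) (show n - v.val + u.val < 2*n by omega)
        have m2 := mod2' (by omega : 0 < n) (show n - u.val + v.val < 2*n by omega)
        have m3 := mod2' (by omega : 0 < n) (show n - (v - u).val < 2*n by omega)
        omega
      rw [SimpleGraph.dist_comm, ← hd]
      calc _ ≤ w.length := SimpleGraph.dist_le w
        _ = _ := hw
  · obtain ⟨w0, _⟩ := cycle_walk hn (v - u).val u v rfl
    have hr : (SimpleGraph.cycleGraph n).Reachable u v := ⟨w0⟩
    obtain ⟨w, hw⟩ := hr.exists_walk_length_eq_dist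
    rw [← hw]
    exact cycle_lb hn w

set_option maxHeartbeats 1600000 in
theorem stmt_19 (n : ℕ) (hn : 3 ≤ n) (x y u v : Fin n)
    (hxy : (SimpleGraph.cycleGraph n).Adj x y) (huv : u ≠ v)
    (h : (SimpleGraph.cycleGraph n).dist u x = (SimpleGraph.cycleGraph n).dist v x) :
    (SimpleGraph.cycleGraph n).dist u y ≠ (SimpleGraph.cycleGraph n).dist v y := by
  haveI : NeZero n := ⟨by omega⟩
  have hn2 : 2 ≤ n := by omega
  rw [cycle_dist hn2, cycle_dist hn2] at h ⊢
  rw [cycleGraph_adj'] at hxy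
  set a := (x - u).val with ha'
  set b := (x - v).val with hb'
  have hab : a ≠ b := by
    intro hab
    apply huv
    have : x - u = x - v := Fin.ext (by simpa using hab)
    exact sub_right_injective this
  have hyu : (y - u).val = (a + (y - x).val) % n := by
    have : y - u = (x - u) + (y - x) := by abel
    rw [this, Fin.val_add]
  have hyv : (y - v).val = (b + (y - x).val) % n := by
    have : y - v = (x - v) + (y - x) := by abel
    rw [this, Fin.val_add]
  have he : (y - x).val = (n - x.val + y.val) % n := by rw [Fin.sub_def]
  have hf : (x - y).val = (n - y.val + x.val) % n := by rw [Fin.sub_def]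
  have hp : x.val < n := x.isLt
  have hq : y.val < n := y.isLt
  have han : a < n := (x - u).isLt
  have hbn : b < n := (x - v).isLt
  have hen : (y - x).val < n := (y - x).isLt
  set a' := (y - u).val with ha2
  set b' := (y - v).val with hb2
  have ha'n : a' < n := (y - u).isLt
  have hb'n : b' < n := (y - v).isLt
  have step1 : (y - x).val = 1 ∨ (y - x).val = n - 1 := by
    have m3 := mod2' (by omega : 0 < n) (show n - x.val + y.val < 2*n by omega)
    have m4 := mod2' (by omega : 0 < n) (show n - y.val + x.val < 2*n by omega)
    omega
  have step2 : 1 ≤ a ∧ a + b = n ∧ 2*a ≠ n := by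
    have m5 := mod2' (by omega : 0 < n) (show n - a < 2*n by omega)
    have m6 := mod2' (by omega : 0 < n) (show n - b < 2*n by omega)
    omega
  clear he hf h hab hxy
  have m1 := mod2' (by omega : 0 < n) (show a + (y - x).val < 2*n by omega)
  have m2 := mod2' (by omega : 0 < n) (show b + (y - x).val < 2*n by omega)
  have m7 := mod2' (by omega : 0 < n) (show n - a' < 2*n by omega)
  have m8 := mod2' (by omega : 0 < n) (show n - b' < 2*n by omega)
  rcases step1 with h1 | h1 <;> rw [h1] at hyu hyv m1 m2 <;> omega
end
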